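/- arXiv:1408.2216 — 3 statements merged into one kernel-verified Lean document; each statement's English description precedes it below -/
import Mathlib

section
/- For any integers d ≥ 1 and h ≥ 1 there exists a 2^{-h}-bracketing cover Δ of [0,1)^d with |Δ| ≤ (1/2)·(2e)^d·(2^{h+2}+1)^d such that every (v,w) ∈ Δ has dyadic coordinates: for each i ∈ {1,…,d}, v_i = 2^{-(⌈log₂(i)⌉+1)(h+1)}·a_i and w_i = 2^{-(⌈log₂(i)⌉+1)(h+2)}·b_i for some integers a_i ∈ {0,…,2^{(⌈log₂(i)⌉+1)(h+1)}} and b_i ∈ {0,…,2^{(⌈log₂(i)⌉+1)(h+2)}}. -/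
open MeasureTheory Finset

namespace Stmt3Aux

/-- level of coordinate number `m` (1-based). -/
def Lv (m : ℕ) : ℕ := Nat.clog 2 m
/-- resolution exponent for `v`-grid of coordinate `m`. -/
def Ev (h m : ℕ) : ℕ := (Lv m + 1) * (h+1)
/-- budget weight of coordinate `m`. -/
noncomputable def Wv (d m : ℕ) : ℝ := (1/2)^(2 * Lv m + 1) + 1/(4*(d:ℝ))
/-- ideal number of resolution units per cell. -/
noncomputable def yv (d h m : ℕ) (P : ℝ) : ℝ :=
  (1/2)^h * Wv d m / ((1/2)^(Ev h m) * P)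
noncomputable def jv (d h m : ℕ) (P : ℝ) : ℕ := Nat.log 2 ⌊yv d h m P⌋₊
/-- cell width: `2^jv` resolution units. -/
noncomputable def sv (d h m : ℕ) (P : ℝ) : ℝ := (2:ℝ)^(jv d h m P) * (1/2)^(Ev h m)
/-- number of cells. -/
noncomputable def Kv (d h m : ℕ) (P : ℝ) : ℕ := 2 ^ (Ev h m - jv d h m P)

open scoped Classical in
/-- The recursive bracketing tree: `SS d h hd m P` refines coordinates with
(0-based) index `< m`, given that the product of the upper faces of the already
fixed coordinates is at most `P`. -/
noncomputable def SS (d h : ℕ) (hd : 0 < d) : ℕ → ℝ → Finset ((Fin d → ℝ) × (Fin d → ℝ))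
  | 0, _ => {(fun _ => (0:ℝ), fun _ => (1:ℝ))}
  | (m+1), P =>
    if P ≤ (1/2:ℝ)^h then {(fun _ => (0:ℝ), fun _ => (1:ℝ))}
    else (Finset.range (Kv d h (m+1) P)).biUnion fun k =>
      (SS d h hd m (P * (((k:ℝ)+1) * sv d h (m+1) P))).image fun p =>
        (Function.update p.1 ⟨m % d, Nat.mod_lt m hd⟩ ((k:ℝ) * sv d h (m+1) P),
         Function.update p.2 ⟨m % d, Nat.mod_lt m hd⟩ (((k:ℝ)+1) * sv d h (m+1) P))

section Facts

variable {d h m : ℕ} {P : ℝ}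

lemma Wv_pos (hd : 0 < d) : 0 < Wv d m := by
  have : (0:ℝ) < 4 * d := by positivity
  unfold Wv; positivity

lemma Wv_le (hd : 0 < d) : Wv d m ≤ 3/4 := by
  unfold Wv
  have h1 : ((1:ℝ)/2)^(2 * Lv m + 1) ≤ (1/2)^1 := by
    apply pow_le_pow_of_le_one (by norm_num) (by norm_num); omega
  have h2 : 1/(4*(d:ℝ)) ≤ 1/4 := by
    have : (4:ℝ) ≤ 4 * d := by
      have : (1:ℝ) ≤ d := by exact_mod_cast hd
      nlinarith
    apply one_div_le_one_div_of_le <;> linarith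
  have h3 : 1/(4*(d:ℝ)) = (d:ℝ)⁻¹ * (1/4) := by ring
  rw [h3] at h2
  norm_num at h1
  linarith

lemma inv4d_lt_Wv (hd : 0 < d) : 1/(4*(d:ℝ)) < Wv d m := by
  unfold Wv
  have : (0:ℝ) < (1/2)^(2 * Lv m + 1) := by positivity
  linarith

lemma res_le_deltaW (hd : 0 < d) (hh : 1 ≤ h) :
    ((1:ℝ)/2)^(Ev h m) ≤ (1/2)^h * Wv d m := by
  have hexp : h + (2 * Lv m + 1) ≤ Ev h m := by
    unfold Ev
    have : Lv m ≤ Lv m * h := Nat.le_mul_of_pos_right _ hh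
    nlinarith [this]
  calc ((1:ℝ)/2)^(Ev h m) ≤ (1/2)^(h + (2*Lv m + 1)) := by
        apply pow_le_pow_of_le_one (by norm_num) (by norm_num) hexp
    _ = (1/2)^h * (1/2)^(2*Lv m+1) := by rw [pow_add]
    _ ≤ (1/2)^h * Wv d m := by
        have : ((1:ℝ)/2)^(2*Lv m+1) ≤ Wv d m := by
          unfold Wv; have : (0:ℝ) < 1/(4*(d:ℝ)) := by positivity
          linarith
        have : (0:ℝ) ≤ (1/2:ℝ)^h := by positivity
        nlinarith

lemma one_le_yv (hd : 0 < d) (hh : 1 ≤ h) (hP0 : 0 < P) (hP1 : P ≤ 1) :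
    1 ≤ yv d h m P := by
  unfold yv
  rw [le_div_iff₀ (by positivity), one_mul]
  have h1 := res_le_deltaW (d := d) (h := h) (m := m) hd hh
  calc ((1:ℝ)/2)^(Ev h m) * P ≤ (1/2)^(Ev h m) * 1 := by
        have : (0:ℝ) ≤ (1/2:ℝ)^(Ev h m) := by positivity
        nlinarith
    _ ≤ (1/2)^h * Wv d m := by rw [mul_one]; exact h1
  
lemma floor_yv_pos (hd : 0 < d) (hh : 1 ≤ h) (hP0 : 0 < P) (hP1 : P ≤ 1) :
    0 < ⌊yv d h m P⌋₊ := by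
  have := one_le_yv (d := d) (h := h) (m := m) hd hh hP0 hP1
  have : (1:ℕ) ≤ ⌊yv d h m P⌋₊ := Nat.le_floor (by exact_mod_cast this)
  omega

lemma yv_pos (hd : 0 < d) (hh : 1 ≤ h) (hP0 : 0 < P) (hP1 : P ≤ 1) :
    0 < yv d h m P :=
  lt_of_lt_of_le one_pos (one_le_yv hd hh hP0 hP1)

/-- `2^jv ≤ y` -/
lemma pow_jv_le (hd : 0 < d) (hh : 1 ≤ h) (hP0 : 0 < P) (hP1 : P ≤ 1) :
    ((2:ℝ))^(jv d h m P) ≤ yv d h m P := by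
  have h1 : 2 ^ (jv d h m P) ≤ ⌊yv d h m P⌋₊ :=
    Nat.pow_log_le_self 2 (by have := floor_yv_pos (d := d) (h := h) (m := m) hd hh hP0 hP1; omega)
  have h2 : (⌊yv d h m P⌋₊ : ℝ) ≤ yv d h m P :=
    Nat.floor_le (le_of_lt (yv_pos hd hh hP0 hP1))
  calc ((2:ℝ))^(jv d h m P) = ((2 ^ (jv d h m P) : ℕ) : ℝ) := by push_cast; ring
    _ ≤ (⌊yv d h m P⌋₊ : ℝ) := by exact_mod_cast h1
    _ ≤ _ := h2

/-- `y < 2 * 2^jv` -/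
lemma yv_lt_two_pow_jv (hd : 0 < d) (hh : 1 ≤ h) (hP0 : 0 < P) (hP1 : P ≤ 1) :
    yv d h m P < 2 * ((2:ℝ))^(jv d h m P) := by
  have h1 : ⌊yv d h m P⌋₊ < 2 ^ (jv d h m P + 1) :=
    Nat.lt_pow_succ_log_self (by norm_num) _
  have h2 : yv d h m P < (⌊yv d h m P⌋₊ : ℝ) + 1 := Nat.lt_floor_add_one _
  have h3 : (⌊yv d h m P⌋₊ : ℝ) + 1 ≤ ((2:ℝ))^(jv d h m P + 1) := by
    have : (⌊yv d h m P⌋₊ : ℕ) + 1 ≤ 2 ^ (jv d h m P + 1) := h1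
    exact_mod_cast this
  calc yv d h m P < (⌊yv d h m P⌋₊ : ℝ) + 1 := h2
    _ ≤ ((2:ℝ))^(jv d h m P + 1) := h3
    _ = 2 * ((2:ℝ))^(jv d h m P) := by ring

/-- spacing positivity -/
lemma sv_pos : 0 < sv d h m P := by unfold sv; positivity

/-- `s * P ≤ δ * W`: the budget bound. -/
lemma sP_le (hd : 0 < d) (hh : 1 ≤ h) (hP0 : 0 < P) (hP1 : P ≤ 1) :
    sv d h m P * P ≤ (1/2)^h * Wv d m := by
  have h1 := pow_jv_le (d := d) (h := h) (m := m) hd hh hP0 hP1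
  have hres : (0:ℝ) < (1/2)^(Ev h m) := by positivity
  unfold sv
  unfold yv at h1
  rw [le_div_iff₀ (by positivity)] at h1
  nlinarith [h1]

/-- `δ * W / 2 < s * P`. -/
lemma lt_sP (hd : 0 < d) (hh : 1 ≤ h) (hP0 : 0 < P) (hP1 : P ≤ 1) :
    (1/2)^h * Wv d m / 2 < sv d h m P * P := by
  have h1 := yv_lt_two_pow_jv (d := d) (h := h) (m := m) hd hh hP0 hP1
  unfold yv at h1
  rw [div_lt_iff₀ (by positivity)] at h1
  unfold sv
  nlinarith [h1]

/-- key counting fact: `(8·2^h·d) * (P * s) > 1`. -/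
lemma one_lt_theta_Ps (hd : 0 < d) (hh : 1 ≤ h) (hP0 : 0 < P) (hP1 : P ≤ 1) :
    1 < (8 * 2^h * d : ℝ) * (P * sv d h m P) := by
  have h1 := lt_sP (d := d) (h := h) (m := m) hd hh hP0 hP1
  have h2 := inv4d_lt_Wv (d := d) (m := m) hd
  have hdpos : (0:ℝ) < d := by exact_mod_cast hd
  have h3 : (8 * 2^h * d : ℝ) * ((1/2)^h * Wv d m / 2) = 4 * d * Wv d m * (2^h * (1/2)^h) := by
    ring
  have h4 : ((2:ℝ))^h * (1/2)^h = 1 := by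
    rw [← mul_pow]; norm_num
  have h5 : (1:ℝ) < 4 * d * Wv d m := by
    have : 4 * (d:ℝ) * (1/(4*(d:ℝ))) = 1 := by field_simp
    nlinarith [h2]
  have h6 : (8 * 2^h * d : ℝ) * ((1/2)^h * Wv d m / 2) < (8 * 2^h * d : ℝ) * (P * sv d h m P) := by
    apply mul_lt_mul_of_pos_left _ (by positivity)
    linarith [h1]
  calc (1:ℝ) < 4 * d * Wv d m := h5
    _ = (8 * 2^h * d : ℝ) * ((1/2)^h * Wv d m / 2) := by rw [h3, h4]; ring
    _ < _ := h6

/-- `jv < Ev` when `δ < P ≤ 1`. -/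
lemma jv_lt_Ev (hd : 0 < d) (hh : 1 ≤ h) (hP0 : (1/2:ℝ)^h < P) (hP1 : P ≤ 1) :
    jv d h m P < Ev h m := by
  have hP0' : 0 < P := lt_trans (by positivity) hP0
  have h1 := pow_jv_le (d := d) (h := h) (m := m) hd hh hP0' hP1
  have h2 : yv d h m P < (2:ℝ)^(Ev h m) := by
    unfold yv
    rw [div_lt_iff₀ (by positivity)]
    have hW : Wv d m ≤ 3/4 := Wv_le hd
    have hWpos : 0 < Wv d m := Wv_pos hd
    have hres : (0:ℝ) < (1/2)^(Ev h m) := by positivity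
    have e1 : ((2:ℝ))^(Ev h m) * ((1/2)^(Ev h m) * P) = P := by
      rw [show ((2:ℝ))^(Ev h m) * ((1/2)^(Ev h m) * P) = (2 * (1/2))^(Ev h m) * P by
        rw [mul_pow]; ring]
      norm_num
    rw [e1]
    have hd2 : (0:ℝ) < (1/2:ℝ)^h := by positivity
    calc (1/2:ℝ)^h * Wv d m ≤ (1/2)^h * 1 := by nlinarith
      _ = (1/2)^h := mul_one _
      _ < P := hP0
  have h3 : ((2:ℝ))^(jv d h m P) < (2:ℝ)^(Ev h m) := lt_of_le_of_lt h1 h2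
  exact (pow_lt_pow_iff_right₀ (by norm_num : (1:ℝ) < 2)).mp h3

/-- `K * s = 1` when `δ < P ≤ 1`. -/
lemma Kv_mul_sv (hd : 0 < d) (hh : 1 ≤ h) (hP0 : (1/2:ℝ)^h < P) (hP1 : P ≤ 1) :
    (Kv d h m P : ℝ) * sv d h m P = 1 := by
  have hj := jv_lt_Ev (d := d) (h := h) (m := m) hd hh hP0 hP1
  unfold Kv sv
  rw [show (((2:ℕ) ^ (Ev h m - jv d h m P) : ℕ) : ℝ) = (2:ℝ) ^ (Ev h m - jv d h m P) by push_cast; ring,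
    ← mul_assoc, ← pow_add]
  have : Ev h m - jv d h m P + jv d h m P = Ev h m := by omega
  rw [this]
  rw [show ((2:ℝ))^(Ev h m) * (1/2)^(Ev h m) = (2 * (1/2))^(Ev h m) by rw [mul_pow]]
  norm_num

end Facts

section SSfacts

variable {d h : ℕ} (hd : 0 < d) {m : ℕ} {P : ℝ}

lemma SS_zero : SS d h hd 0 P = {(fun _ => (0:ℝ), fun _ => (1:ℝ))} := rfl

lemma SS_succ_stop (hstop : P ≤ (1/2:ℝ)^h) :
    SS d h hd (m+1) P = {(fun _ => (0:ℝ), fun _ => (1:ℝ))} := by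
  rw [SS]; rw [if_pos hstop]

open scoped Classical in
lemma SS_succ (hstop : ¬ P ≤ (1/2:ℝ)^h) :
    SS d h hd (m+1) P = (Finset.range (Kv d h (m+1) P)).biUnion fun k =>
      (SS d h hd m (P * (((k:ℝ)+1) * sv d h (m+1) P))).image fun p =>
        (Function.update p.1 ⟨m % d, Nat.mod_lt m hd⟩ ((k:ℝ) * sv d h (m+1) P),
         Function.update p.2 ⟨m % d, Nat.mod_lt m hd⟩ (((k:ℝ)+1) * sv d h (m+1) P)) := by
  rw [SS]; rw [if_neg hstop]

/-- per-coordinate properties of the trivial pair -/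
lemma trivial_struct (h : ℕ) (i : Fin d) (m : ℕ) :
    ((fun _ => (0:ℝ)) i = 0 ∧ (fun _ => (1:ℝ)) i = 1) ∧
    (0 ≤ (0:ℝ) ∧ (0:ℝ) ≤ 1 ∧ (1:ℝ) ≤ 1) ∧
    (∃ a : ℕ, a ≤ 2 ^ ((Lv ((i:ℕ)+1) + 1) * (h+1)) ∧
      (0:ℝ) = (a:ℝ)/2^((Lv ((i:ℕ)+1)+1)*(h+1))) ∧
    (∃ b : ℕ, b ≤ 2 ^ ((Lv ((i:ℕ)+1) + 1) * (h+2)) ∧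
      (1:ℝ) = (b:ℝ)/2^((Lv ((i:ℕ)+1)+1)*(h+2))) := by
  refine ⟨⟨rfl, rfl⟩, ⟨le_refl _, by norm_num, le_refl _⟩,
    ⟨0, by positivity, by norm_num⟩,
    ⟨2^((Lv ((i:ℕ)+1)+1)*(h+2)), le_refl _, ?_⟩⟩
  rw [eq_div_iff (by positivity)]
  push_cast; ring

/-- Structural invariant: support, order bounds, and dyadic coordinates. -/
lemma SS_struct (hd : 0 < d) (hh : 1 ≤ h) :
    ∀ m, m ≤ d → ∀ P : ℝ, 0 < P → P ≤ 1 →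
    ∀ p ∈ SS d h hd m P, ∀ i : Fin d,
      (m ≤ (i:ℕ) → p.1 i = 0 ∧ p.2 i = 1) ∧
      (0 ≤ p.1 i ∧ p.1 i ≤ p.2 i ∧ p.2 i ≤ 1) ∧
      (∃ a : ℕ, a ≤ 2 ^ ((Lv ((i:ℕ)+1) + 1) * (h+1)) ∧
        p.1 i = (a:ℝ)/2^((Lv ((i:ℕ)+1)+1)*(h+1))) ∧
      (∃ b : ℕ, b ≤ 2 ^ ((Lv ((i:ℕ)+1) + 1) * (h+2)) ∧
        p.2 i = (b:ℝ)/2^((Lv ((i:ℕ)+1)+1)*(h+2))) := by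
  intro m
  induction m with
  | zero =>
    intro _ P _ _ p hp i
    rw [SS_zero] at hp
    simp only [Finset.mem_singleton] at hp
    subst hp
    exact ⟨fun _ => (trivial_struct h i 0).1, (trivial_struct h i 0).2⟩
  | succ m ih =>
    intro hm1 P hP0 hP1 p hp i
    by_cases hstop : P ≤ (1/2:ℝ)^h
    · rw [SS_succ_stop hd hstop] at hp
      simp only [Finset.mem_singleton] at hp
      subst hp
      exact ⟨fun _ => (trivial_struct h i 0).1, (trivial_struct h i 0).2⟩
    · rw [SS_succ hd hstop] at hp
      simp only [Finset.mem_biUnion, Finset.mem_image, Finset.mem_range] at hp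
      obtain ⟨k, hk, q, hq, rfl⟩ := hp
      have hPd : (1/2:ℝ)^h < P := not_le.mp hstop
      have hKs := Kv_mul_sv (d := d) (h := h) (m := m+1) hd hh hPd hP1
      have hspos : (0:ℝ) < sv d h (m+1) P := sv_pos
      have hk1K : (k:ℝ)+1 ≤ (Kv d h (m+1) P : ℝ) := by exact_mod_cast hk
      have hw1 : ((k:ℝ)+1) * sv d h (m+1) P ≤ 1 := by nlinarith
      have hchildpos : 0 < P * (((k:ℝ)+1) * sv d h (m+1) P) := by positivity
      have hchild1 : P * (((k:ℝ)+1) * sv d h (m+1) P) ≤ 1 := by nlinarith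
      have IH := ih (by omega) _ hchildpos hchild1 q hq
      have hidx : ((⟨m % d, Nat.mod_lt m hd⟩ : Fin d) : ℕ) = m := Nat.mod_eq_of_lt (by omega)
      by_cases hi : i = (⟨m % d, Nat.mod_lt m hd⟩ : Fin d)
      · subst hi
        simp only [Function.update_self]
        have hmd : m % d = m := Nat.mod_eq_of_lt (by omega)
        rw [hmd]
        have hjE : jv d h (m+1) P < Ev h (m+1) :=
          jv_lt_Ev hd hh hPd hP1
        have hkK2 : (k+1) * 2^(jv d h (m+1) P) ≤ 2^(Ev h (m+1)) := by
          have h1 : k + 1 ≤ Kv d h (m+1) P := hk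
          calc (k+1) * 2^(jv d h (m+1) P) ≤ Kv d h (m+1) P * 2^(jv d h (m+1) P) :=
                Nat.mul_le_mul_right _ h1
            _ = 2^(Ev h (m+1) - jv d h (m+1) P) * 2^(jv d h (m+1) P) := rfl
            _ = 2^(Ev h (m+1)) := by rw [← pow_add]; congr 1; omega
        refine ⟨by omega, ?_, ?_, ?_⟩
        · constructor
          · positivity
          constructor
          · nlinarith
          · exact hw1
        · -- dyadic for v
          refine ⟨k * 2^(jv d h (m+1) P), ?_, ?_⟩
          · calc k * 2^(jv d h (m+1) P) ≤ (k+1) * 2^(jv d h (m+1) P) := by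
                  exact Nat.mul_le_mul_right _ (by omega)
              _ ≤ 2^(Ev h (m+1)) := hkK2
              _ = 2^((Lv (m+1)+1)*(h+1)) := rfl
          · show (k:ℝ) * sv d h (m+1) P = _
            unfold sv
            rw [eq_div_iff (by positivity)]
            have h1 : ((1:ℝ)/2)^(Ev h (m+1)) * (2:ℝ)^((Lv (m+1)+1)*(h+1)) = 1 := by
              show ((1:ℝ)/2)^((Lv (m+1)+1)*(h+1)) * (2:ℝ)^((Lv (m+1)+1)*(h+1)) = 1
              rw [← mul_pow]; norm_num
            push_cast
            linear_combination ((k:ℝ) * (2:ℝ)^(jv d h (m+1) P)) * h1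
        · -- dyadic for w
          refine ⟨(k+1) * 2^(jv d h (m+1) P) * 2^(Lv (m+1)+1), ?_, ?_⟩
          · calc (k+1) * 2^(jv d h (m+1) P) * 2^(Lv (m+1)+1)
                ≤ 2^(Ev h (m+1)) * 2^(Lv (m+1)+1) := Nat.mul_le_mul_right _ hkK2
              _ = 2^((Lv (m+1)+1)*(h+2)) := by
                  rw [← pow_add, show Ev h (m+1) + (Lv (m+1)+1) = (Lv (m+1)+1)*(h+2) from by
                    unfold Ev; ring]
          · show ((k:ℝ)+1) * sv d h (m+1) P = _
            unfold sv
            rw [eq_div_iff (by positivity)]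
            have h2 : ((1:ℝ)/2)^(Ev h (m+1)) * (2:ℝ)^((Lv (m+1)+1)*(h+2))
                = (2:ℝ)^(Lv (m+1)+1) := by
              have hEe : (Lv (m+1)+1)*(h+2) = Ev h (m+1) + (Lv (m+1)+1) := by
                unfold Ev; ring
              rw [hEe, pow_add, ← mul_assoc]
              rw [show ((1:ℝ)/2)^(Ev h (m+1)) * (2:ℝ)^(Ev h (m+1)) = 1 by
                rw [← mul_pow]; norm_num]
              ring
            push_cast
            linear_combination (((k:ℝ)+1) * (2:ℝ)^(jv d h (m+1) P)) * h2
      · simp only [Function.update_of_ne hi]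
        have IHi := IH i
        exact ⟨fun hmi => IHi.1 (by omega), IHi.2⟩

/-- Covering: every point of `[0,1)^d` lies in some bracket. -/
lemma SS_cover (hd : 0 < d) (hh : 1 ≤ h) (x : Fin d → ℝ) (hx : ∀ i, 0 ≤ x i ∧ x i < 1) :
    ∀ m, ∀ P : ℝ, 0 < P → P ≤ 1 →
    ∃ p ∈ SS d h hd m P, ∀ i : Fin d, (i:ℕ) < m → p.1 i ≤ x i ∧ x i < p.2 i := by
  intro m
  induction m with
  | zero =>
    intro P _ _
    exact ⟨_, Finset.mem_singleton_self _, fun i hi => absurd hi (by omega)⟩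
  | succ m ih =>
    intro P hP0 hP1
    by_cases hstop : P ≤ (1/2:ℝ)^h
    · rw [SS_succ_stop hd hstop]
      exact ⟨_, Finset.mem_singleton_self _, fun i _ => ⟨(hx i).1, (hx i).2⟩⟩
    · rw [SS_succ hd hstop]
      have hPd : (1/2:ℝ)^h < P := not_le.mp hstop
      have hKs := Kv_mul_sv (d := d) (h := h) (m := m+1) hd hh hPd hP1
      have hspos : (0:ℝ) < sv d h (m+1) P := sv_pos
      set idx : Fin d := ⟨m % d, Nat.mod_lt m hd⟩ with hidxdef
      set s := sv d h (m+1) P with hsdef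
      set k := ⌊x idx / s⌋₊ with hkdef
      have hk : k < Kv d h (m+1) P := by
        have h1 : x idx / s < (Kv d h (m+1) P : ℝ) := by
          rw [div_lt_iff₀ hspos, ← hsdef] at *
          calc x idx < 1 := (hx idx).2
            _ = _ := hKs.symm
        exact Nat.floor_lt (div_nonneg (hx idx).1 hspos.le) |>.mpr h1
      have hkx : (k:ℝ) * s ≤ x idx := by
        have h1 : (k:ℝ) ≤ x idx / s := Nat.floor_le (div_nonneg (hx idx).1 hspos.le)
        calc (k:ℝ) * s ≤ (x idx / s) * s := by nlinarith
          _ = x idx := by field_simp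
      have hxk : x idx < ((k:ℝ)+1) * s := by
        have h1 := Nat.lt_floor_add_one (x idx / s)
        calc x idx = (x idx / s) * s := by field_simp
          _ < ((k:ℝ)+1)*s := by nlinarith
      have hk1K : (k:ℝ)+1 ≤ (Kv d h (m+1) P : ℝ) := by exact_mod_cast hk
      have hw1 : ((k:ℝ)+1) * s ≤ 1 := by nlinarith
      obtain ⟨q, hq, hqx⟩ := ih (P * (((k:ℝ)+1) * s)) (by positivity) (by nlinarith)
      refine ⟨(Function.update q.1 idx ((k:ℝ)*s), Function.update q.2 idx (((k:ℝ)+1)*s)), ?_, ?_⟩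
      · exact Finset.mem_biUnion.mpr ⟨k, Finset.mem_range.mpr hk,
          Finset.mem_image.mpr ⟨q, hq, rfl⟩⟩
      · intro i him
        by_cases hi : i = idx
        · subst hi
          simp only [Function.update_self]
          exact ⟨hkx, hxk⟩
        · simp only [Function.update_of_ne hi]
          apply hqx
          have h2 : (i:ℕ) ≠ m := by
            intro hc
            exact hi (Fin.ext (by rw [hc, hidxdef]; exact (Nat.mod_eq_of_lt (by
              have := i.isLt; omega)).symm))
          omega

/-- the processed index set -/
def Fm (d m : ℕ) : Finset (Fin d) := Finset.univ.filter (fun i : Fin d => (i:ℕ) < m)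

lemma Fm_succ (hd : 0 < d) {m : ℕ} (hm : m < d) :
    Fm d (m+1) = insert (⟨m % d, Nat.mod_lt m hd⟩ : Fin d) (Fm d m) := by
  ext i
  simp only [Fm, Finset.mem_filter, Finset.mem_univ, true_and, Finset.mem_insert]
  constructor
  · intro hi
    rcases Nat.lt_succ_iff_lt_or_eq.mp hi with h1 | h1
    · exact Or.inr h1
    · exact Or.inl (Fin.ext (by rw [h1]; exact (Nat.mod_eq_of_lt hm).symm))
  · intro hi
    rcases hi with h1 | h1
    · subst h1; simp [Nat.mod_eq_of_lt hm]
    · omega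

lemma idx_not_mem_Fm (hd : 0 < d) {m : ℕ} (hm : m < d) :
    (⟨m % d, Nat.mod_lt m hd⟩ : Fin d) ∉ Fm d m := by
  simp only [Fm, Finset.mem_filter, Finset.mem_univ, true_and, not_lt]
  rw [Nat.mod_eq_of_lt hm]

/-- The gap invariant. -/
lemma SS_gap (hd : 0 < d) (hh : 1 ≤ h) :
    ∀ m, m ≤ d → ∀ P : ℝ, 0 < P → P ≤ 1 →
    ∀ p ∈ SS d h hd m P,
      ((∏ i ∈ Fm d m, p.1 i) = 0 ∧ P * (∏ i ∈ Fm d m, p.2 i) ≤ (1/2:ℝ)^h) ∨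
      (P * (∏ i ∈ Fm d m, p.2 i) - P * (∏ i ∈ Fm d m, p.1 i)
        ≤ (1/2:ℝ)^h * ∑ i ∈ Fm d m, Wv d ((i:ℕ)+1)) := by
  intro m
  induction m with
  | zero =>
    intro _ P hP0 _ p hp
    right
    have he : Fm d 0 = (∅ : Finset (Fin d)) := by
      ext i; simp [Fm]
    rw [he]
    simp
  | succ m ih =>
    intro hm1 P hP0 hP1 p hp
    have hmd : m < d := by omega
    have hFm := Fm_succ hd hmd
    have hnm := idx_not_mem_Fm hd hmd
    by_cases hstop : P ≤ (1/2:ℝ)^h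
    · rw [SS_succ_stop hd hstop] at hp
      simp only [Finset.mem_singleton] at hp
      subst hp
      left
      constructor
      · apply Finset.prod_eq_zero (i := (⟨m % d, Nat.mod_lt m hd⟩ : Fin d))
        · rw [hFm]; exact Finset.mem_insert_self _ _
        · rfl
      · calc P * ∏ i ∈ Fm d (m+1), (1:ℝ) = P := by rw [Finset.prod_const_one, mul_one]
          _ ≤ (1/2:ℝ)^h := hstop
    · rw [SS_succ hd hstop] at hp
      simp only [Finset.mem_biUnion, Finset.mem_image, Finset.mem_range] at hp
      obtain ⟨k, hk, q, hq, rfl⟩ := hp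
      have hPd : (1/2:ℝ)^h < P := not_le.mp hstop
      have hKs := Kv_mul_sv (d := d) (h := h) (m := m+1) hd hh hPd hP1
      have hspos : (0:ℝ) < sv d h (m+1) P := sv_pos
      have hk1K : (k:ℝ)+1 ≤ (Kv d h (m+1) P : ℝ) := by exact_mod_cast hk
      have hw1 : ((k:ℝ)+1) * sv d h (m+1) P ≤ 1 := by nlinarith
      have hchildpos : 0 < P * (((k:ℝ)+1) * sv d h (m+1) P) := by positivity
      have hchild1 : P * (((k:ℝ)+1) * sv d h (m+1) P) ≤ 1 := by nlinarith
      have IH := ih (by omega) _ hchildpos hchild1 q hq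
      have hstruct := SS_struct hd hh m (by omega) _ hchildpos hchild1 q hq
      -- products over the new index set
      have hprod1 : (∏ i ∈ Fm d (m+1), (Function.update q.1 (⟨m % d, Nat.mod_lt m hd⟩ : Fin d) ((k:ℝ) * sv d h (m+1) P)) i)
          = ((k:ℝ) * sv d h (m+1) P) * ∏ i ∈ Fm d m, q.1 i := by
        rw [hFm, Finset.prod_insert hnm, Function.update_self]
        congr 1
        apply Finset.prod_congr rfl
        intro i hi
        apply Function.update_of_ne
        intro hc; exact hnm (hc ▸ hi)
      have hprod2 : (∏ i ∈ Fm d (m+1), (Function.update q.2 (⟨m % d, Nat.mod_lt m hd⟩ : Fin d) (((k:ℝ)+1) * sv d h (m+1) P)) i)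
          = (((k:ℝ)+1) * sv d h (m+1) P) * ∏ i ∈ Fm d m, q.2 i := by
        rw [hFm, Finset.prod_insert hnm, Function.update_self]
        congr 1
        apply Finset.prod_congr rfl
        intro i hi
        apply Function.update_of_ne
        intro hc; exact hnm (hc ▸ hi)
      have hsum : (∑ i ∈ Fm d (m+1), Wv d ((i:ℕ)+1))
          = Wv d (m+1) + ∑ i ∈ Fm d m, Wv d ((i:ℕ)+1) := by
        rw [hFm, Finset.sum_insert hnm]
        congr 2
        simp [Nat.mod_eq_of_lt hmd]
      have hq1nonneg : 0 ≤ ∏ i ∈ Fm d m, q.1 i :=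
        Finset.prod_nonneg (fun i _ => (hstruct i).2.1.1)
      have hq1le1 : (∏ i ∈ Fm d m, q.1 i) ≤ 1 :=
        Finset.prod_le_one (fun i _ => (hstruct i).2.1.1)
          (fun i _ => le_trans (hstruct i).2.1.2.1 (hstruct i).2.1.2.2)
      have hq2nonneg : 0 ≤ ∏ i ∈ Fm d m, q.2 i :=
        Finset.prod_nonneg (fun i _ => le_trans (hstruct i).2.1.1 (hstruct i).2.1.2.1)
      have hPsW := sP_le (d := d) (h := h) (m := m+1) hd hh (lt_trans (by positivity) hPd) hP1
      rcases IH with ⟨hz, hb⟩ | hb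
      · left
        constructor
        · rw [hprod1, hz, mul_zero]
        · rw [hprod2]
          calc P * ((((k:ℝ)+1) * sv d h (m+1) P) * ∏ i ∈ Fm d m, q.2 i)
              = P * (((k:ℝ)+1) * sv d h (m+1) P) * ∏ i ∈ Fm d m, q.2 i := by ring
            _ ≤ (1/2:ℝ)^h := hb
      · right
        rw [hprod1, hprod2, hsum]
        have key : P * ((((k:ℝ)+1) * sv d h (m+1) P) * ∏ i ∈ Fm d m, q.2 i)
            - P * (((k:ℝ) * sv d h (m+1) P) * ∏ i ∈ Fm d m, q.1 i)
            = (P * (((k:ℝ)+1) * sv d h (m+1) P) * (∏ i ∈ Fm d m, q.2 i)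
               - P * (((k:ℝ)+1) * sv d h (m+1) P) * (∏ i ∈ Fm d m, q.1 i))
              + P * sv d h (m+1) P * (∏ i ∈ Fm d m, q.1 i) := by ring
        rw [key]
        have h2 : P * sv d h (m+1) P * (∏ i ∈ Fm d m, q.1 i) ≤ (1/2:ℝ)^h * Wv d (m+1) := by
          have := mul_le_mul_of_nonneg_left hq1le1 (le_of_lt (mul_pos hP0 hspos))
          calc P * sv d h (m+1) P * (∏ i ∈ Fm d m, q.1 i) ≤ P * sv d h (m+1) P * 1 := by
                nlinarith
            _ = sv d h (m+1) P * P := by ring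
            _ ≤ (1/2:ℝ)^h * Wv d (m+1) := hPsW
        have h1 : P * (((k:ℝ)+1) * sv d h (m+1) P) * (∏ i ∈ Fm d m, q.2 i)
            - P * (((k:ℝ)+1) * sv d h (m+1) P) * (∏ i ∈ Fm d m, q.1 i)
            ≤ (1/2:ℝ)^h * ∑ i ∈ Fm d m, Wv d ((i:ℕ)+1) := by
          calc _ = P * (((k:ℝ)+1) * sv d h (m+1) P) * (∏ i ∈ Fm d m, q.2 i)
                - P * (((k:ℝ)+1) * sv d h (m+1) P) * (∏ i ∈ Fm d m, q.1 i) := rfl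
            _ ≤ _ := by
              have := hb
              nlinarith [hb]
        linarith

lemma Lv_one : Lv 1 = 0 := by
  unfold Lv; exact Nat.clog_one_right 2

lemma Lv_two : Lv 2 = 1 := by
  unfold Lv
  have h1 : Nat.clog 2 2 ≤ 1 := (Nat.clog_le_iff_le_pow (by norm_num)).mpr (by norm_num)
  have h2 : ¬ (Nat.clog 2 2 ≤ 0) := by
    intro hc
    have := (Nat.clog_le_iff_le_pow (by norm_num : (1:ℕ) < 2)).mp hc
    norm_num at this
  omega

/-- telescoping majorant for the level weights -/
noncomputable def gmaj (m : ℕ) : ℝ :=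
  ((2:ℝ)^(Lv m) - ((m:ℝ) - 1)) * (1/2)^(2*Lv m+1) + (1/2)^(Lv m + 2)

lemma gmaj_nonneg (m : ℕ) : 0 ≤ gmaj m := by
  unfold gmaj
  have h1 : m ≤ 2^(Lv m) := Nat.le_pow_clog (by norm_num) m
  have h2 : (m:ℝ) ≤ (2:ℝ)^(Lv m) := by exact_mod_cast h1
  have h3 : (0:ℝ) ≤ ((2:ℝ)^(Lv m) - ((m:ℝ) - 1)) := by linarith
  positivity

lemma f_le_gmaj_sub (m : ℕ) (hm : 2 ≤ m) :
    ((1:ℝ)/2)^(2*Lv m+1) ≤ gmaj m - gmaj (m+1) := by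
  have hup : m ≤ 2^(Lv m) := Nat.le_pow_clog (by norm_num) m
  by_cases hb : m = 2^(Lv m)
  · -- boundary case
    have hL1 : Lv (m+1) = Lv m + 1 := by
      unfold Lv
      have hle : Nat.clog 2 (m+1) ≤ Nat.clog 2 m + 1 := by
        apply (Nat.clog_le_iff_le_pow (by norm_num)).mpr
        have : (2:ℕ)^(Nat.clog 2 m + 1) = 2 * 2^(Nat.clog 2 m) := by ring
        rw [this]
        have h1 : 1 ≤ 2^(Nat.clog 2 m) := Nat.one_le_two_pow
        unfold Lv at hb; omega
      have hge : ¬ (Nat.clog 2 (m+1) ≤ Nat.clog 2 m) := by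
        intro hc
        have := (Nat.clog_le_iff_le_pow (by norm_num : (1:ℕ) < 2)).mp hc
        unfold Lv at hb; omega
      omega
    unfold gmaj
    rw [hL1]
    set L := Lv m with hLdef
    have hcast : (m:ℝ) = (2:ℝ)^L := by
      rw [hb]; push_cast; ring
    have hB : ((2:ℝ)^L) * ((1:ℝ)/2)^(2*(L+1)+1) = (1/2)^(L+3) := by
      rw [show 2*(L+1)+1 = L + (L+3) by ring, pow_add, ← mul_assoc]
      rw [show ((2:ℝ)^L * ((1:ℝ)/2)^L) = 1 by rw [← mul_pow]; norm_num]
      ring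
    have hAB : ((2:ℝ)^(L+1) - (((m+1:ℕ):ℝ) - 1)) * ((1:ℝ)/2)^(2*(L+1)+1) = (1/2)^(L+3) := by
      have hA : ((2:ℝ)^(L+1) - (((m+1:ℕ):ℝ) - 1)) = (2:ℝ)^L := by
        push_cast; rw [hcast]; ring
      rw [hA]; exact hB
    have hD' : ((2:ℝ)^L - ((m:ℝ)-1)) * ((1:ℝ)/2)^(2*L+1) = (1/2)^(2*L+1) := by
      rw [show ((2:ℝ)^L - ((m:ℝ)-1)) = 1 by rw [hcast]; ring, one_mul]
    have hC : ((1:ℝ)/2)^(L+2) = 2 * ((1:ℝ)/2)^(L+3) := by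
      rw [show L+3 = (L+2)+1 by ring, pow_succ]; ring
    have hE : ((1:ℝ)/2)^(L+1+2) = ((1:ℝ)/2)^(L+3) := by
      rw [show L+1+2 = L+3 by ring]
    linarith [hAB, hD', hC, hE]
  · -- interior case
    have hlt : m < 2^(Lv m) := by omega
    have hL1 : Lv (m+1) = Lv m := by
      unfold Lv
      have hle : Nat.clog 2 (m+1) ≤ Nat.clog 2 m :=
        (Nat.clog_le_iff_le_pow (by norm_num)).mpr (by unfold Lv at hlt; omega)
      have hge : Nat.clog 2 m ≤ Nat.clog 2 (m+1) := Nat.clog_mono_right 2 (by omega)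
      omega
    unfold gmaj
    rw [hL1]
    push_cast
    ring_nf
    linarith

lemma gmaj_two : gmaj 2 = 1/4 := by
  unfold gmaj
  rw [Lv_two]
  norm_num

/-- total weight bound -/
lemma sum_Wv_le_one (hd : 0 < d) : ∑ i : Fin d, Wv d ((i:ℕ)+1) ≤ 1 := by
  have h2 : ∑ _i : Fin d, (1/(4*(d:ℝ))) = 1/4 := by
    rw [Finset.sum_const, Finset.card_univ, Fintype.card_fin]
    have : (d:ℝ) ≠ 0 := by positivity
    field_simp
    ring
    exact mul_inv_cancel₀ this
  have h1 : ∑ i : Fin d, ((1:ℝ)/2)^(2*Lv ((i:ℕ)+1)+1) ≤ 3/4 := by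
    rw [Fin.sum_univ_eq_sum_range (fun j => ((1:ℝ)/2)^(2*Lv (j+1)+1)) d]
    obtain ⟨e, rfl⟩ : ∃ e, d = e + 1 := ⟨d - 1, by omega⟩
    rw [Finset.sum_range_succ']
    have hf0 : ((1:ℝ)/2)^(2*Lv (0+1)+1) = 1/2 := by
      norm_num [Lv_one]
    have htel : ∀ n : ℕ, ∑ j ∈ Finset.range n, (gmaj (j+2) - gmaj (j+3)) = gmaj 2 - gmaj (n+2) := by
      intro n
      induction n with
      | zero => simp
      | succ n ihn =>
        rw [Finset.sum_range_succ, ihn, show n+1+2 = n+3 by omega]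
        ring
    have htail : ∑ j ∈ Finset.range e, ((1:ℝ)/2)^(2*Lv ((j+1)+1)+1) ≤ 1/4 := by
      calc ∑ j ∈ Finset.range e, ((1:ℝ)/2)^(2*Lv ((j+1)+1)+1)
          ≤ ∑ j ∈ Finset.range e, (gmaj (j+2) - gmaj (j+3)) := by
            apply Finset.sum_le_sum
            intro j _
            have hle := f_le_gmaj_sub (j+2) (by omega)
            rw [show (j+2)+1 = j+3 by omega] at hle
            rw [show (j+1)+1 = j+2 by omega]
            exact hle
        _ = gmaj 2 - gmaj (e+2) := htel e
        _ ≤ gmaj 2 := by have := gmaj_nonneg (e+2); linarith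
        _ = 1/4 := gmaj_two
    rw [hf0]
    linarith
  have : ∑ i : Fin d, Wv d ((i:ℕ)+1)
      = (∑ i : Fin d, ((1:ℝ)/2)^(2*Lv ((i:ℕ)+1)+1)) + ∑ _i : Fin d, (1/(4*(d:ℝ))) := by
    unfold Wv
    rw [← Finset.sum_add_distrib]
  rw [this, h2]
  linarith

/-- hockey stick identity -/
lemma hockey (r : ℕ) : ∀ T : ℕ, ∑ t ∈ Finset.range (T+1), Nat.choose (t+r) r
    = Nat.choose (T+r+1) (r+1) := by
  intro T
  induction T with
  | zero => simp
  | succ T ihT =>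
    rw [Finset.sum_range_succ, ihT]
    rw [show (T+1)+r+1 = (T+r+1)+1 by omega, show (T+1)+r = T+r+1 by omega,
      Nat.choose_succ_succ' (T+r+1) r]
    omega

/-- The cardinality bound. -/
lemma SS_card (hd : 0 < d) (hh : 1 ≤ h) :
    ∀ m, ∀ P : ℝ, 0 < P → P ≤ 1 →
    (SS d h hd m P).card ≤ Nat.choose (⌊(8 * 2^h * d : ℝ) * P⌋₊ + m) m := by
  intro m
  induction m with
  | zero =>
    intro P _ _
    rw [SS_zero]
    simp
  | succ m ih =>
    intro P hP0 hP1
    by_cases hstop : P ≤ (1/2:ℝ)^h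
    · rw [SS_succ_stop hd hstop]
      rw [Finset.card_singleton]
      exact Nat.succ_le_of_lt (Nat.choose_pos (by omega))
    · rw [SS_succ hd hstop]
      have hPd : (1/2:ℝ)^h < P := not_le.mp hstop
      have hKs := Kv_mul_sv (d := d) (h := h) (m := m+1) hd hh hPd hP1
      have hspos : (0:ℝ) < sv d h (m+1) P := sv_pos
      have htheta := one_lt_theta_Ps (d := d) (h := h) (m := m+1) hd hh hP0 hP1
      set θ : ℝ := (8 * 2^h * d : ℝ) with hθdef
      have hθpos : 0 < θ := by
        rw [hθdef]
        have : (0:ℝ) < d := by exact_mod_cast hd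
        positivity
      set t : ℕ → ℕ := fun k => ⌊θ * (P * (((k:ℝ)+1) * sv d h (m+1) P))⌋₊ with htdef
      have hstep : ∀ k : ℕ, t k + 1 ≤ t (k+1) := by
        intro k
        have harg : θ * (P * (((k:ℝ)+1) * sv d h (m+1) P)) + 1
            ≤ θ * (P * ((((k+1):ℕ):ℝ)+1) * sv d h (m+1) P) := by
          push_cast
          nlinarith [htheta]
        calc t k + 1 = ⌊θ * (P * (((k:ℝ)+1) * sv d h (m+1) P)) + 1⌋₊ := by
              rw [Nat.floor_add_one (by positivity)]
          _ ≤ t (k+1) := by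
              apply Nat.floor_le_floor
              calc θ * (P * (((k:ℝ)+1) * sv d h (m+1) P)) + 1 ≤ _ := harg
                _ = θ * (P * (((((k+1):ℕ):ℝ)+1) * sv d h (m+1) P)) := by ring
      have hmono : ∀ k1 k2 : ℕ, k1 < k2 → t k1 < t k2 := by
        intro k1 k2 hlt
        have hle : ∀ a b : ℕ, a ≤ b → t a ≤ t b := by
          intro a b hab
          apply Nat.floor_le_floor
          have : ((a:ℝ)+1) ≤ ((b:ℝ)+1) := by
            have : (a:ℝ) ≤ b := by exact_mod_cast hab
            linarith
          nlinarith
        calc t k1 < t k1 + 1 := by omega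
          _ ≤ t (k1+1) := hstep k1
          _ ≤ t k2 := hle _ _ (by omega)
      have hub : ∀ k, k < Kv d h (m+1) P → t k ≤ ⌊θ * P⌋₊ := by
        intro k hk
        apply Nat.floor_le_floor
        have hk1K : (k:ℝ)+1 ≤ (Kv d h (m+1) P : ℝ) := by exact_mod_cast hk
        have hw1 : ((k:ℝ)+1) * sv d h (m+1) P ≤ 1 := by nlinarith
        nlinarith
      calc (((Finset.range (Kv d h (m+1) P)).biUnion _).card)
          ≤ ∑ k ∈ Finset.range (Kv d h (m+1) P),
              ((SS d h hd m (P * (((k:ℝ)+1) * sv d h (m+1) P))).image _).card :=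
            Finset.card_biUnion_le
        _ ≤ ∑ k ∈ Finset.range (Kv d h (m+1) P),
              (SS d h hd m (P * (((k:ℝ)+1) * sv d h (m+1) P))).card :=
            Finset.sum_le_sum (fun k _ => Finset.card_image_le)
        _ ≤ ∑ k ∈ Finset.range (Kv d h (m+1) P), Nat.choose (t k + m) m := by
            apply Finset.sum_le_sum
            intro k hk
            have hk1K : (k:ℝ)+1 ≤ (Kv d h (m+1) P : ℝ) := by
              exact_mod_cast Finset.mem_range.mp hk
            have hw1 : ((k:ℝ)+1) * sv d h (m+1) P ≤ 1 := by nlinarith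
            exact ih _ (by positivity) (by nlinarith)
        _ = ∑ u ∈ (Finset.range (Kv d h (m+1) P)).image t, Nat.choose (u + m) m := by
            rw [Finset.sum_image]
            intro x _ y _ hxy
            by_contra hne
            rcases lt_or_gt_of_ne hne with h1 | h1
            · exact absurd hxy (Nat.ne_of_lt (hmono _ _ h1))
            · exact absurd hxy.symm (Nat.ne_of_lt (hmono _ _ h1))
        _ ≤ ∑ u ∈ Finset.range (⌊θ * P⌋₊ + 1), Nat.choose (u + m) m := by
            apply Finset.sum_le_sum_of_subset
            intro u hu
            simp only [Finset.mem_image, Finset.mem_range] at hu ⊢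
            obtain ⟨k, hk, rfl⟩ := hu
            have := hub k hk
            omega
        _ = Nat.choose (⌊θ * P⌋₊ + m + 1) (m+1) := hockey m _
        _ = Nat.choose (⌊θ * P⌋₊ + (m+1)) (m+1) := by rw [Nat.add_assoc]

end SSfacts

/-- `2 d^d ≤ d! e^d`. -/
lemma two_pow_self_le_factorial_exp : ∀ d : ℕ, 1 ≤ d →
    2 * (d:ℝ)^d ≤ (d.factorial : ℝ) * Real.exp 1 ^ d := by
  intro d
  induction d with
  | zero => omega
  | succ n ihn =>
    intro _
    by_cases hn : n = 0
    · subst hn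
      simp only [Nat.factorial, Nat.cast_one, pow_one]
      have h2 : (2:ℝ) ≤ Real.exp 1 := by
        have := Real.add_one_le_exp 1
        linarith
      push_cast
      norm_num
      linarith
    · have ihn' := ihn (by omega)
      have hn0 : (0:ℝ) < n := by exact_mod_cast Nat.pos_of_ne_zero hn
      have hexp1 : (0:ℝ) < Real.exp 1 := Real.exp_pos 1
      have h1 : ((n:ℝ)+1) ≤ Real.exp (1/(n:ℝ)) * n := by
        have := Real.add_one_le_exp (1/(n:ℝ))
        have h2 : (1/(n:ℝ) + 1) * n ≤ Real.exp (1/(n:ℝ)) * n := by nlinarith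
        calc ((n:ℝ)+1) = (1/(n:ℝ) + 1) * n := by field_simp; ring
          _ ≤ _ := h2
      have h2 : ((n:ℝ)+1)^n ≤ (Real.exp (1/(n:ℝ)) * n)^n :=
        pow_le_pow_left₀ (by positivity) h1 n
      have h3 : (Real.exp (1/(n:ℝ)) * (n:ℝ))^n = Real.exp 1 * (n:ℝ)^n / Real.exp 1 * Real.exp 1 := by
        rw [mul_pow]
        rw [← Real.exp_nat_mul]
        rw [show (n:ℝ) * (1/(n:ℝ)) = 1 by field_simp]
        field_simp
      have h4 : ((n:ℝ)+1)^n ≤ Real.exp 1 * (n:ℝ)^n := by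
        rw [h3] at h2
        calc ((n:ℝ)+1)^n ≤ Real.exp 1 * (n:ℝ)^n / Real.exp 1 * Real.exp 1 := h2
          _ = Real.exp 1 * (n:ℝ)^n := by field_simp
      -- goal : 2 * ((n+1):ℝ)^(n+1) ≤ (n+1)! * e^(n+1)
      have hfact : ((Nat.factorial (n+1) : ℕ) : ℝ) = ((n:ℝ)+1) * (Nat.factorial n : ℝ) := by
        rw [Nat.factorial_succ]; push_cast; ring
      push_cast
      rw [hfact]
      calc 2 * ((n:ℝ)+1)^(n+1) = ((n:ℝ)+1) * (2 * ((n:ℝ)+1)^n) := by ring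
        _ ≤ ((n:ℝ)+1) * (2 * (Real.exp 1 * (n:ℝ)^n)) := by nlinarith
        _ = ((n:ℝ)+1) * Real.exp 1 * (2 * (n:ℝ)^n) := by ring
        _ ≤ ((n:ℝ)+1) * Real.exp 1 * ((n.factorial : ℝ) * Real.exp 1 ^ n) := by
            have : (0:ℝ) ≤ ((n:ℝ)+1) * Real.exp 1 := by positivity
            nlinarith
        _ = ((n:ℝ)+1) * (n.factorial : ℝ) * Real.exp 1 ^ (n+1) := by ring

/-- numeric endgame -/
lemma choose_le_target (d h : ℕ) (hd : 1 ≤ d) :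
    (((8 * 2^h * d + d).choose d : ℕ) : ℝ)
      ≤ (1/2) * (2 * Real.exp 1) ^ d * ((2:ℝ)^(h+2) + 1)^d := by
  set T : ℕ := 8 * 2^h * d with hT
  have hd0 : (0:ℝ) < d := by exact_mod_cast hd
  have hfac : (0:ℝ) < (d.factorial : ℝ) := by exact_mod_cast d.factorial_pos
  -- choose * d! ≤ (T+d)^d
  have h1 : ((T+d).choose d : ℝ) * (d.factorial : ℝ) ≤ ((T:ℝ)+d)^d := by
    have hnat : (T+d).choose d * d.factorial ≤ (T+d)^d := by
      calc (T+d).choose d * d.factorial = d.factorial * (T+d).choose d := by ring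
        _ = (T+d).descFactorial d := (Nat.descFactorial_eq_factorial_mul_choose _ _).symm
        _ ≤ (T+d)^d := Nat.descFactorial_le_pow _ _
    calc ((T+d).choose d : ℝ) * (d.factorial : ℝ) = (((T+d).choose d * d.factorial : ℕ) : ℝ) := by
          push_cast; ring
      _ ≤ (((T+d)^d : ℕ) : ℝ) := by exact_mod_cast hnat
      _ = ((T:ℝ)+d)^d := by push_cast; ring
  have h2 := two_pow_self_le_factorial_exp d hd
  -- (T+d) = (8*2^h+1) * d
  have h3 : ((T:ℝ)+d) = ((8:ℝ)*2^h+1) * d := by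
    rw [hT]; push_cast; ring
  have h4 : ((T:ℝ)+d)^d = ((8:ℝ)*2^h+1)^d * (d:ℝ)^d := by
    rw [h3, mul_pow]
  -- combine: 2 * choose * d! ≤ 2 (8·2^h+1)^d d^d ≤ (8·2^h+1)^d d! e^d
  have h5 : 2 * ((T+d).choose d : ℝ) * (d.factorial : ℝ)
      ≤ ((8:ℝ)*2^h+1)^d * ((d.factorial : ℝ) * Real.exp 1 ^ d) := by
    have hB : (0:ℝ) ≤ ((8:ℝ)*2^h+1)^d := by positivity
    nlinarith [h1, h2, hB]
  have h6 : ((T+d).choose d : ℝ) ≤ (1/2) * ((8:ℝ)*2^h+1)^d * Real.exp 1 ^ d := by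
    nlinarith [h5, hfac]
  have h7 : ((8:ℝ)*2^h+1)^d * Real.exp 1 ^ d ≤ (2 * Real.exp 1) ^ d * ((2:ℝ)^(h+2) + 1)^d := by
    have hb : ((8:ℝ)*2^h+1) ≤ 2 * ((2:ℝ)^(h+2) + 1) := by
      have : (8:ℝ)*2^h = 2 * (2:ℝ)^(h+2) := by
        rw [pow_add]; ring
      rw [this]; linarith
    calc ((8:ℝ)*2^h+1)^d * Real.exp 1 ^ d
        = (((8:ℝ)*2^h+1) * Real.exp 1)^d := by rw [mul_pow]
      _ ≤ ((2 * ((2:ℝ)^(h+2) + 1)) * Real.exp 1)^d := by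
          apply pow_le_pow_left₀ (by positivity)
          have := Real.exp_pos 1
          nlinarith
      _ = (2 * Real.exp 1) ^ d * ((2:ℝ)^(h+2) + 1)^d := by
          rw [← mul_pow]
          congr 1
          ring
  calc (((T+d).choose d : ℕ) : ℝ) ≤ (1/2) * ((8:ℝ)*2^h+1)^d * Real.exp 1 ^ d := h6
    _ = (1/2) * (((8:ℝ)*2^h+1)^d * Real.exp 1 ^ d) := by ring
    _ ≤ (1/2) * ((2 * Real.exp 1) ^ d * ((2:ℝ)^(h+2) + 1)^d) := by linarith [h7]
    _ = (1/2) * (2 * Real.exp 1) ^ d * ((2:ℝ)^(h+2) + 1)^d := by ring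

/-- volume of the difference of two anchored boxes -/
lemma vol_diff_le {d : ℕ} (v w : Fin d → ℝ) (δ : ℝ)
    (hb : ∀ i, 0 ≤ v i ∧ v i ≤ w i ∧ w i ≤ 1)
    (hgap : (∏ i, w i) - (∏ i, v i) ≤ δ) :
    volume ((Set.univ.pi fun i => Set.Ico (0:ℝ) (w i)) \
        (Set.univ.pi fun i => Set.Ico (0:ℝ) (v i))) ≤ ENNReal.ofReal δ := by
  have hsub : (Set.univ.pi fun i => Set.Ico (0:ℝ) (v i)) ⊆
      (Set.univ.pi fun i => Set.Ico (0:ℝ) (w i)) := by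
    apply Set.pi_mono
    intro i _
    exact Set.Ico_subset_Ico le_rfl (hb i).2.1
  have hmeas : NullMeasurableSet (Set.univ.pi fun i => Set.Ico (0:ℝ) (v i)) volume :=
    (MeasurableSet.univ_pi (fun i => measurableSet_Ico)).nullMeasurableSet
  have hvolv : volume (Set.univ.pi fun i => Set.Ico (0:ℝ) (v i))
      = ∏ i, ENNReal.ofReal (v i) := by
    rw [volume_pi_pi]
    congr 1
    funext i
    rw [Real.volume_Ico, sub_zero]
  have hvolw : volume (Set.univ.pi fun i => Set.Ico (0:ℝ) (w i))
      = ∏ i, ENNReal.ofReal (w i) := by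
    rw [volume_pi_pi]
    congr 1
    funext i
    rw [Real.volume_Ico, sub_zero]
  have hfin : volume (Set.univ.pi fun i => Set.Ico (0:ℝ) (v i)) ≠ ⊤ := by
    rw [hvolv]
    exact (ENNReal.prod_lt_top (fun i _ => ENNReal.ofReal_lt_top)).ne
  rw [measure_diff hsub hmeas hfin, hvolv, hvolw]
  have hov : (∏ i, ENNReal.ofReal (v i)) = ENNReal.ofReal (∏ i, v i) :=
    (ENNReal.ofReal_prod_of_nonneg (fun i _ => (hb i).1)).symm
  have how : (∏ i, ENNReal.ofReal (w i)) = ENNReal.ofReal (∏ i, w i) :=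
    (ENNReal.ofReal_prod_of_nonneg (fun i _ => le_trans (hb i).1 (hb i).2.1)).symm
  rw [hov, how]
  rw [← ENNReal.ofReal_sub _ (Finset.prod_nonneg (fun i _ => (hb i).1))]
  exact ENNReal.ofReal_le_ofReal hgap

end Stmt3Aux


/-- `Δ` is a `δ`-bracketing cover of `[0,1)^d`. -/
def IsBracketingCover (d : ℕ) (δ : ℝ) (Δ : Finset ((Fin d → ℝ) × (Fin d → ℝ))) : Prop :=
  ∀ x : Fin d → ℝ, (∀ i, x i ∈ Set.Ico (0:ℝ) 1) →
    ∃ p ∈ Δ, (∀ i, p.1 i ≤ x i ∧ x i ≤ p.2 i) ∧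
      volume ((Set.univ.pi fun i => Set.Ico (0:ℝ) (p.2 i)) \
        (Set.univ.pi fun i => Set.Ico (0:ℝ) (p.1 i))) ≤ ENNReal.ofReal δ

/-- There is a `2^{-h}`-bracketing cover of cardinality at most `(1/2)(2e)^d (2^{h+2}+1)^d`
all of whose brackets have dyadic coordinates: `v i` is an integer multiple of
`2^{-(⌈log₂(i)⌉+1)(h+1)}` and `w i` an integer multiple of `2^{-(⌈log₂(i)⌉+1)(h+2)}`
(with `i` running through `1, …, d`, here represented by `(i : Fin d)` with value `i+1`). -/
theorem stmt3 (d h : ℕ) (hd : 1 ≤ d) (hh : 1 ≤ h) :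
    ∃ Δ : Finset ((Fin d → ℝ) × (Fin d → ℝ)),
      IsBracketingCover d (((2:ℝ) ^ h)⁻¹) Δ ∧
      (Δ.card : ℝ) ≤ (1/2) * (2 * Real.exp 1) ^ d * ((2:ℝ) ^ (h+2) + 1) ^ d ∧
      ∀ p ∈ Δ, ∀ i : Fin d,
        (∃ a : ℕ, a ≤ 2 ^ ((Nat.clog 2 ((i : ℕ) + 1) + 1) * (h + 1)) ∧
          p.1 i = (a : ℝ) / 2 ^ ((Nat.clog 2 ((i : ℕ) + 1) + 1) * (h + 1))) ∧
        (∃ b : ℕ, b ≤ 2 ^ ((Nat.clog 2 ((i : ℕ) + 1) + 1) * (h + 2)) ∧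
          p.2 i = (b : ℝ) / 2 ^ ((Nat.clog 2 ((i : ℕ) + 1) + 1) * (h + 2))) := by

  have hd0 : 0 < d := hd
  have hdelta : (((2:ℝ)^h)⁻¹) = (1/2:ℝ)^h := by
    rw [div_pow, one_pow, one_div]
  refine ⟨Stmt3Aux.SS d h hd0 d 1, ?_, ?_, ?_⟩
  · -- covering property
    intro x hx
    have hx' : ∀ i, 0 ≤ x i ∧ x i < 1 := fun i => ⟨(hx i).1, (hx i).2⟩
    obtain ⟨p, hp, hpx⟩ := Stmt3Aux.SS_cover hd0 hh x hx' d 1 one_pos le_rfl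
    refine ⟨p, hp, fun i => ⟨(hpx i i.isLt).1, le_of_lt (hpx i i.isLt).2⟩, ?_⟩
    have hstruct := Stmt3Aux.SS_struct hd0 hh d le_rfl 1 one_pos le_rfl p hp
    have hgap := Stmt3Aux.SS_gap hd0 hh d le_rfl 1 one_pos le_rfl p hp
    have hFm : Stmt3Aux.Fm d d = Finset.univ := by
      ext i
      simp [Stmt3Aux.Fm, i.isLt]
    rw [hFm] at hgap
    have hbnd : ∀ i, 0 ≤ p.1 i ∧ p.1 i ≤ p.2 i ∧ p.2 i ≤ 1 := fun i => (hstruct i).2.1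
    have hgap' : (∏ i, p.2 i) - (∏ i, p.1 i) ≤ (1/2:ℝ)^h := by
      rcases hgap with ⟨hz, hb⟩ | hb
      · rw [hz]
        rw [one_mul] at hb
        linarith
      · have hws := Stmt3Aux.sum_Wv_le_one (d := d) hd0
        have hpos : (0:ℝ) ≤ (1/2:ℝ)^h := by positivity
        have h2 := mul_le_mul_of_nonneg_left hws hpos
        rw [one_mul, one_mul] at hb
        calc (∏ i, p.2 i) - (∏ i, p.1 i)
            ≤ (1/2:ℝ)^h * ∑ i : Fin d, Stmt3Aux.Wv d ((i:ℕ)+1) := hb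
          _ ≤ (1/2:ℝ)^h * 1 := h2
          _ = (1/2:ℝ)^h := mul_one _
    rw [hdelta]
    exact Stmt3Aux.vol_diff_le p.1 p.2 ((1/2:ℝ)^h) hbnd hgap'
  · -- cardinality
    have hcard := Stmt3Aux.SS_card hd0 hh d 1 one_pos le_rfl
    have hfl : ⌊(8 * 2^h * (d:ℝ)) * 1⌋₊ = 8 * 2^h * d := by
      rw [mul_one, show ((8:ℝ) * 2^h * (d:ℝ)) = ((8 * 2^h * d : ℕ) : ℝ) by push_cast; ring]
      exact Nat.floor_natCast _
    rw [hfl] at hcard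
    calc ((Stmt3Aux.SS d h hd0 d 1).card : ℝ)
        ≤ (((8 * 2^h * d + d).choose d : ℕ) : ℝ) := by exact_mod_cast hcard
      _ ≤ (1/2) * (2 * Real.exp 1) ^ d * ((2:ℝ)^(h+2) + 1)^d :=
          Stmt3Aux.choose_le_target d h hd
  · -- dyadic coordinates
    intro p hp i
    exact (Stmt3Aux.SS_struct hd0 hh d le_rfl 1 one_pos le_rfl p hp i).2.2
end

section
/- (Maximal Bernstein inequality) Let Z_1,…,Z_N be i.i.d. real random variables with mean zero, variance σ² > 0, and |Z_1| ≤ 1 almost surely. Then for every t > 0, P(max_{1≤M≤N} |∑_{n=1}^M Z_n| > t) ≤ 2·exp(−t²/(2Nσ² + 2t/3)). -/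
open MeasureTheory ProbabilityTheory



lemma bern_exp_series (l : ℝ) :
    Real.exp l - 1 - l = ∑' n : ℕ, l ^ (n + 2) / (Nat.factorial (n + 2)) := by
  have hsum : Summable (fun n : ℕ => l ^ n / Nat.factorial n) := Real.summable_pow_div_factorial l
  have h0 : Real.exp l = ∑' n : ℕ, l ^ n / Nat.factorial n := by
    rw [Real.exp_eq_exp_ℝ, NormedSpace.exp_eq_tsum_div]
  have hsum1 : Summable (fun n : ℕ => l ^ (n + 1) / Nat.factorial (n + 1)) :=
    (summable_nat_add_iff 1).mpr hsum
  rw [h0, Summable.tsum_eq_zero_add hsum, Summable.tsum_eq_zero_add hsum1]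
  simp [Nat.factorial]

lemma bern_mgf_pointwise {l x : ℝ} (hl : 0 ≤ l) (hx : |x| ≤ 1) :
    Real.exp (l * x) ≤ 1 + l * x + x ^ 2 * (Real.exp l - 1 - l) := by
  have key : Real.exp (l * x) - 1 - (l * x) ≤ x ^ 2 * (Real.exp l - 1 - l) := by
    rw [bern_exp_series (l * x), bern_exp_series l, ← tsum_mul_left]
    have hsA : Summable (fun n : ℕ => (l * x) ^ (n + 2) / Nat.factorial (n + 2)) :=
      (summable_nat_add_iff 2).mpr (Real.summable_pow_div_factorial (l * x))
    have hsB : Summable (fun n : ℕ => x ^ 2 * (l ^ (n + 2) / Nat.factorial (n + 2))) :=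
      ((summable_nat_add_iff 2).mpr (Real.summable_pow_div_factorial l)).mul_left _
    refine Summable.tsum_le_tsum (fun n => ?_) hsA hsB
    have hfac : (0:ℝ) < Nat.factorial (n + 2) := by positivity
    rw [div_le_iff₀ hfac]
    have heq : x ^ 2 * (l ^ (n + 2) / ↑(Nat.factorial (n + 2))) * ↑(Nat.factorial (n + 2)) = l ^ (n + 2) * x ^ 2 := by
      field_simp
    rw [heq]
    calc (l * x) ^ (n + 2) = l ^ (n + 2) * x ^ (n + 2) := mul_pow _ _ _
      _ ≤ l ^ (n + 2) * x ^ 2 := by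
          refine mul_le_mul_of_nonneg_left ?_ (by positivity)
          calc x ^ (n + 2) ≤ |x ^ (n + 2)| := le_abs_self _
            _ = |x| ^ n * |x| ^ 2 := by rw [abs_pow, pow_add]
            _ ≤ 1 * |x| ^ 2 := by
                refine mul_le_mul_of_nonneg_right (pow_le_one₀ (abs_nonneg x) hx) (by positivity)
            _ = x ^ 2 := by rw [one_mul, sq_abs]
  linarith

lemma factorial_ge (n : ℕ) : 2 * 3 ^ n ≤ Nat.factorial (n + 2) := by
  induction n with
  | zero => simp [Nat.factorial]
  | succ k ih =>
      have : Nat.factorial (k + 3) = (k + 3) * Nat.factorial (k + 2) := rfl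
      rw [this, pow_succ]
      calc 2 * (3 ^ k * 3) = 3 * (2 * 3 ^ k) := by ring
        _ ≤ 3 * Nat.factorial (k + 2) := by exact Nat.mul_le_mul_left 3 ih
        _ ≤ (k + 3) * Nat.factorial (k + 2) := Nat.mul_le_mul_right _ (by omega)

-- key inequality B
lemma bern_exp_bound {l : ℝ} (hl : 0 ≤ l) (hl3 : l < 3) :
    Real.exp l - 1 - l ≤ l ^ 2 / (2 * (1 - l / 3)) := by
  rw [bern_exp_series]
  have hgeom : Summable (fun n : ℕ => l ^ (n + 2) / (2 * 3 ^ n)) := by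
    have h : (fun n : ℕ => l ^ (n + 2) / (2 * 3 ^ n)) =
        (fun n : ℕ => (l ^ 2 / 2) * (l / 3) ^ n) := by
      funext n; rw [div_pow]; ring
    rw [h]
    exact (summable_geometric_of_lt_one (by positivity) (by linarith)).mul_left _
  have hsum2 : Summable (fun n : ℕ => l ^ (n + 2) / Nat.factorial (n + 2)) :=
    (summable_nat_add_iff 2).mpr (Real.summable_pow_div_factorial l)
  calc ∑' n : ℕ, l ^ (n + 2) / Nat.factorial (n + 2)
      ≤ ∑' n : ℕ, l ^ (n + 2) / (2 * 3 ^ n) := by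
        refine Summable.tsum_le_tsum (fun n => ?_) hsum2 hgeom
        have h2 : (0:ℝ) < 2 * 3 ^ n := by positivity
        have h3 : (2 * 3 ^ n : ℝ) ≤ Nat.factorial (n + 2) := by exact_mod_cast factorial_ge n
        exact div_le_div_of_nonneg_left (by positivity) h2 h3
    _ = ∑' n : ℕ, (l ^ 2 / 2) * (l / 3) ^ n := by
        congr 1; funext n; rw [div_pow]; ring
    _ = (l ^ 2 / 2) * (1 - l / 3)⁻¹ := by
        rw [tsum_mul_left, tsum_geometric_of_lt_one (by positivity) (by linarith)]
    _ = l ^ 2 / (2 * (1 - l / 3)) := by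
        rw [div_mul_eq_div_div]
        rw [div_eq_mul_inv (l^2/2)]


lemma indepFun_of_measurable_le {Ω : Type*} {mΩ : MeasurableSpace Ω} {μ : Measure Ω}
    {m1 m2 : MeasurableSpace Ω} {f g : Ω → ℝ} (h : Indep m1 m2 μ)
    (hf : Measurable[m1] f) (hg : Measurable[m2] g) : IndepFun f g μ := by
  rw [IndepFun_iff]
  rw [Indep_iff] at h
  rintro t1 t2 ⟨s1, hs1, rfl⟩ ⟨s2, hs2, rfl⟩
  exact h _ _ (hf hs1) (hg hs2)

lemma bern_indep_block {Ω : Type*} {mΩ : MeasurableSpace Ω} (μ : Measure Ω)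
    [IsProbabilityMeasure μ]
    (N M : ℕ) (hMN : M ≤ N) (Z : ℕ → Ω → ℝ) (l t : ℝ)
    (hmeas : ∀ n, Measurable (Z n))
    (hindep : iIndepFun (m := fun _ : Fin N => (inferInstance : MeasurableSpace ℝ))
      (fun n : Fin N => Z n) μ) :
    IndepFun
      ((Set.indicator {ω | t < ∑ n ∈ Finset.range M, Z n ω ∧
          ∀ K < M, ∑ n ∈ Finset.range K, Z n ω ≤ t})
        (fun ω => Real.exp (l * ∑ n ∈ Finset.range M, Z n ω)))
      (fun ω => Real.exp (l * ∑ n ∈ Finset.Ico M N, Z n ω)) μ := by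
  set m1 : MeasurableSpace Ω :=
    ⨆ i ∈ {i : Fin N | (i : ℕ) < M}, MeasurableSpace.comap (Z i) inferInstance with hm1
  set m2 : MeasurableSpace Ω :=
    ⨆ i ∈ {i : Fin N | M ≤ (i : ℕ)}, MeasurableSpace.comap (Z i) inferInstance with hm2
  have hdisj : Disjoint {i : Fin N | (i : ℕ) < M} {i : Fin N | M ≤ (i : ℕ)} := by
    rw [Set.disjoint_left]; intro i h1 h2; simp only [Set.mem_setOf_eq] at h1 h2; omega
  have hIndep : Indep m1 m2 μ :=
    indep_iSup_of_disjoint (m := fun i : Fin N => MeasurableSpace.comap (Z i) inferInstance)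
      (fun i => (hmeas i).comap_le) hindep.iIndep hdisj
  have hZm1 : ∀ n < M, Measurable[m1] (Z n) := by
    intro n hn
    have hi : ((⟨n, lt_of_lt_of_le hn hMN⟩ : Fin N) : ℕ) < M := hn
    exact (Measurable.of_comap_le le_rfl).mono
      (le_iSup₂ (f := fun (i : Fin N) (_ : i ∈ {i : Fin N | (i : ℕ) < M}) =>
        MeasurableSpace.comap (Z i) inferInstance) ⟨n, lt_of_lt_of_le hn hMN⟩ hi) le_rfl
  have hZm2 : ∀ n, M ≤ n → n < N → Measurable[m2] (Z n) := by
    intro n hn hnN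
    have hi : M ≤ ((⟨n, hnN⟩ : Fin N) : ℕ) := hn
    exact (Measurable.of_comap_le le_rfl).mono
      (le_iSup₂ (f := fun (i : Fin N) (_ : i ∈ {i : Fin N | M ≤ (i : ℕ)}) =>
        MeasurableSpace.comap (Z i) inferInstance) ⟨n, hnN⟩ hi) le_rfl
  have hSm1 : ∀ K ≤ M, Measurable[m1] (fun ω => ∑ n ∈ Finset.range K, Z n ω) := by
    intro K hK
    exact Finset.measurable_sum _ (fun n hn => hZm1 n (lt_of_lt_of_le (Finset.mem_range.mp hn) hK))
  refine indepFun_of_measurable_le hIndep ?_ ?_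
  · refine Measurable.indicator ?_ ?_
    · exact (measurable_const.mul (hSm1 M le_rfl)).exp
    · have : {ω | t < ∑ n ∈ Finset.range M, Z n ω ∧
          ∀ K < M, ∑ n ∈ Finset.range K, Z n ω ≤ t}
          = {ω | t < ∑ n ∈ Finset.range M, Z n ω} ∩
            ⋂ K, ⋂ (_ : K < M), {ω | ∑ n ∈ Finset.range K, Z n ω ≤ t} := by
        ext ω; simp [Set.mem_iInter]
      rw [this]
      exact (measurableSet_lt measurable_const (hSm1 M le_rfl)).inter
        (MeasurableSet.iInter fun K => MeasurableSet.iInter fun hK =>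
          measurableSet_le (hSm1 K hK.le) measurable_const)
  · refine (measurable_const.mul ?_).exp
    exact Finset.measurable_sum _ (fun n hn => hZm2 n (Finset.mem_Ico.mp hn).1 (Finset.mem_Ico.mp hn).2)

lemma bern_one_sided {Ω : Type*} [mΩ : MeasurableSpace Ω] (μ : Measure Ω)
    [IsProbabilityMeasure μ]
    (N : ℕ) (hN : 1 ≤ N) (Z : ℕ → Ω → ℝ) (v : ℝ) (hv : 0 < v)
    (hmeas : ∀ n, Measurable (Z n))
    (hindep : iIndepFun (m := fun _ : Fin N => (inferInstance : MeasurableSpace ℝ))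
      (fun n : Fin N => Z n) μ)
    (hmean : ∀ n < N, μ[Z n] = 0)
    (hsq : ∀ n < N, μ[fun ω => (Z n ω) ^ 2] ≤ v)
    (hbdd : ∀ n < N, ∀ᵐ ω ∂μ, |Z n ω| ≤ 1)
    (t : ℝ) (ht : 0 < t) :
    μ {ω | ∃ M, 1 ≤ M ∧ M ≤ N ∧ t < ∑ n ∈ Finset.range M, Z n ω}
      ≤ ENNReal.ofReal (Real.exp (-(t ^ 2) / (2 * N * v + 2 * t / 3))) := by
  classical
  have hN' : (1:ℝ) ≤ (N:ℝ) := by exact_mod_cast hN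
  have hc : (0:ℝ) < N * v := by nlinarith
  have hct : (0:ℝ) < N * v + t / 3 := by linarith
  set l : ℝ := t / (N * v + t / 3) with hl_def
  have hl : 0 < l := div_pos ht hct
  have hl3 : l < 3 := by rw [hl_def, div_lt_iff₀ hct]; nlinarith
  set e : ℝ := Real.exp l - 1 - l with he_def
  have he : 0 ≤ e := by have := Real.add_one_le_exp l; simp only [he_def]; linarith
  have hSmeas : ∀ (s : Finset ℕ), Measurable (fun ω => ∑ n ∈ s, Z n ω) :=
    fun s => Finset.measurable_sum _ fun n _ => hmeas n
  have hbddAll : ∀ᵐ ω ∂μ, ∀ n, n < N → |Z n ω| ≤ 1 := by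
    rw [ae_all_iff]
    intro n
    by_cases hn : n < N
    · filter_upwards [hbdd n hn] with ω h; exact fun _ => h
    · exact ae_of_all _ fun ω h' => absurd h' hn
  have hsum_bdd : ∀ (s : Finset ℕ), (∀ n ∈ s, n < N) →
      ∀ᵐ ω ∂μ, |∑ n ∈ s, Z n ω| ≤ N := by
    intro s hs
    filter_upwards [hbddAll] with ω h
    calc |∑ n ∈ s, Z n ω| ≤ ∑ n ∈ s, |Z n ω| := Finset.abs_sum_le_sum_abs _ _
      _ ≤ ∑ _n ∈ s, (1:ℝ) := Finset.sum_le_sum fun n hn => h n (hs n hn)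
      _ = (s.card : ℝ) := by simp
      _ ≤ (N:ℝ) := by
          have hsub : s ⊆ Finset.range N := fun n hn => Finset.mem_range.mpr (hs n hn)
          have := Finset.card_le_card hsub
          rw [Finset.card_range] at this
          exact_mod_cast this
  have hint_exp : ∀ (s : Finset ℕ), (∀ n ∈ s, n < N) →
      Integrable (fun ω => Real.exp (l * ∑ n ∈ s, Z n ω)) μ := by
    intro s hs
    refine Integrable.mono' (integrable_const (Real.exp (l * N)))
      ((measurable_const.mul (hSmeas s)).exp.aestronglyMeasurable) ?_
    filter_upwards [hsum_bdd s hs] with ω h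
    rw [Real.norm_eq_abs, Real.abs_exp]
    exact Real.exp_le_exp.mpr (mul_le_mul_of_nonneg_left ((le_abs_self _).trans h) hl.le)
  have hint_Z : ∀ n < N, Integrable (Z n) μ := fun n hn =>
    Integrable.mono' (integrable_const 1) (hmeas n).aestronglyMeasurable
      (by filter_upwards [hbdd n hn] with ω h; rwa [Real.norm_eq_abs])
  have hint_Zsq : ∀ n < N, Integrable (fun ω => (Z n ω) ^ 2) μ := fun n hn =>
    Integrable.mono' (integrable_const 1) ((hmeas n).pow_const 2).aestronglyMeasurable
      (by filter_upwards [hbdd n hn] with ω h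
          rw [Real.norm_eq_abs, abs_pow]
          exact pow_le_one₀ (abs_nonneg _) h)
  have hmgf1 : ∀ n < N, μ[fun ω => Real.exp (l * Z n ω)] ≤ Real.exp (v * e) := by
    intro n hn
    have hintS : Integrable (fun ω => Real.exp (l * Z n ω)) μ := by
      have := hint_exp {n} (by simpa using hn)
      simpa using this
    have h1 : μ[fun ω => Real.exp (l * Z n ω)]
        ≤ μ[fun ω => 1 + l * Z n ω + (Z n ω) ^ 2 * e] := by
      refine integral_mono_ae hintS
        (((integrable_const 1).add ((hint_Z n hn).const_mul l)).add ((hint_Zsq n hn).mul_const e)) ?_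
      filter_upwards [hbdd n hn] with ω h
      exact bern_mgf_pointwise hl.le h
    have ha : Integrable (fun ω => 1 + l * Z n ω) μ :=
      (integrable_const 1).add ((hint_Z n hn).const_mul l)
    have hb : Integrable (fun ω => (Z n ω) ^ 2 * e) μ := (hint_Zsq n hn).mul_const e
    have h2 : μ[fun ω => 1 + l * Z n ω + (Z n ω) ^ 2 * e]
        = 1 + l * μ[Z n] + μ[fun ω => (Z n ω) ^ 2] * e := by
      rw [integral_add ha hb, integral_add (integrable_const 1) ((hint_Z n hn).const_mul l),
        integral_const, integral_const_mul, integral_mul_const]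
      simp
    rw [h2, hmean n hn] at h1
    have h3 : μ[fun ω => (Z n ω) ^ 2] * e ≤ v * e :=
      mul_le_mul_of_nonneg_right (hsq n hn) he
    have h4 := Real.add_one_le_exp (v * e)
    linarith
  have hmgfN : μ[fun ω => Real.exp (l * ∑ n ∈ Finset.range N, Z n ω)]
      ≤ Real.exp ((N:ℝ) * (v * e)) := by
    have hfun : (fun ω => ∑ n ∈ Finset.range N, Z n ω)
        = ∑ i ∈ Finset.univ, (fun n : Fin N => Z (n:ℕ)) i := by
      funext ω
      rw [Finset.sum_apply]
      exact (Fin.sum_univ_eq_sum_range (fun n => Z n ω) N).symm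
    have hmgf_eq := hindep.mgf_sum (fun i => hmeas i) Finset.univ (t := l)
    have : μ[fun ω => Real.exp (l * ∑ n ∈ Finset.range N, Z n ω)]
        = mgf (∑ i ∈ Finset.univ, (fun n : Fin N => Z (n:ℕ)) i) μ l := by
      rw [← hfun]; rfl
    rw [this, hmgf_eq]
    calc ∏ i : Fin N, mgf (Z (i:ℕ)) μ l ≤ ∏ _i : Fin N, Real.exp (v * e) :=
          Finset.prod_le_prod (fun i _ => mgf_nonneg) (fun i _ => hmgf1 i i.isLt)
      _ = Real.exp (v * e) ^ N := by simp
      _ = Real.exp ((N:ℝ) * (v * e)) := by rw [← Real.exp_nat_mul]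
  set A : ℕ → Set Ω := fun M => {ω | t < ∑ n ∈ Finset.range M, Z n ω ∧
      ∀ K < M, ∑ n ∈ Finset.range K, Z n ω ≤ t} with hA_def
  have hAmeas : ∀ M, MeasurableSet (A M) := by
    intro M
    have hrw : A M = {ω | t < ∑ n ∈ Finset.range M, Z n ω} ∩
        ⋂ K, ⋂ (_ : K < M), {ω | ∑ n ∈ Finset.range K, Z n ω ≤ t} := by
      ext ω; simp [hA_def, Set.mem_iInter]
    rw [hrw]
    exact (measurableSet_lt measurable_const (hSmeas _)).inter
      (MeasurableSet.iInter fun K => MeasurableSet.iInter fun _ =>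
        measurableSet_le (hSmeas _) measurable_const)
  have hsubset : {ω | ∃ M, 1 ≤ M ∧ M ≤ N ∧ t < ∑ n ∈ Finset.range M, Z n ω}
      ⊆ ⋃ M ∈ Finset.Icc 1 N, A M := by
    intro ω hω
    obtain ⟨M, hM1, hMN, hMt⟩ := hω
    have hex : ∃ K, t < ∑ n ∈ Finset.range K, Z n ω := ⟨M, hMt⟩
    have hM0 : t < ∑ n ∈ Finset.range (Nat.find hex), Z n ω := Nat.find_spec hex
    have hmin : ∀ K < Nat.find hex, ∑ n ∈ Finset.range K, Z n ω ≤ t :=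
      fun K hK => le_of_not_gt (Nat.find_min hex hK)
    have hM0le : Nat.find hex ≤ M := Nat.find_min' hex hMt
    have hM01 : 1 ≤ Nat.find hex := by
      rcases Nat.eq_zero_or_pos (Nat.find hex) with h0 | h
      · exfalso; rw [h0] at hM0; simp at hM0; linarith
      · exact h
    exact Set.mem_biUnion (Finset.mem_Icc.mpr ⟨hM01, hM0le.trans hMN⟩) ⟨hM0, hmin⟩
  have hdisj2 : ∀ a b : ℕ, a < b → Disjoint (A a) (A b) := by
    intro a b hab
    rw [Set.disjoint_left]
    rintro ω ⟨hgt, _⟩ ⟨_, hall⟩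
    exact absurd (hall a hab) (not_le.mpr hgt)
  have hdisjA : (↑(Finset.Icc 1 N) : Set ℕ).Pairwise (Function.onFun Disjoint A) := by
    intro a _ b _ hne
    rcases hne.lt_or_gt with h | h
    · exact hdisj2 a b h
    · exact (hdisj2 b a h).symm
  have hkey : ∀ M ∈ Finset.Icc 1 N, Real.exp (l * t) * (μ (A M)).toReal
      ≤ ∫ ω in A M, Real.exp (l * ∑ n ∈ Finset.range N, Z n ω) ∂μ := by
    intro M hM
    obtain ⟨hM1, hMN⟩ := Finset.mem_Icc.mp hM
    have hrange : ∀ n ∈ Finset.range M, n < N :=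
      fun n hn => lt_of_lt_of_le (Finset.mem_range.mp hn) hMN
    have hIco : ∀ n ∈ Finset.Ico M N, n < N := fun n hn => (Finset.mem_Ico.mp hn).2
    set F1 : Ω → ℝ := Set.indicator (A M)
      (fun ω => Real.exp (l * ∑ n ∈ Finset.range M, Z n ω)) with hF1
    set F2 : Ω → ℝ := fun ω => Real.exp (l * ∑ n ∈ Finset.Ico M N, Z n ω) with hF2
    have hintF2 : Integrable F2 μ := hint_exp _ hIco
    have hintE1 : Integrable (fun ω => Real.exp (l * ∑ n ∈ Finset.range M, Z n ω)) μ :=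
      hint_exp _ hrange
    have hintF1 : Integrable F1 μ := hintE1.indicator (hAmeas M)
    have hstep1 : Real.exp (l * t) * (μ (A M)).toReal
        ≤ ∫ ω in A M, Real.exp (l * ∑ n ∈ Finset.range M, Z n ω) ∂μ := by
      refine setIntegral_ge_of_const_le_real (hAmeas M) (measure_ne_top μ _) ?_ hintE1.integrableOn
      intro ω hω
      exact Real.exp_le_exp.mpr (mul_le_mul_of_nonneg_left hω.1.le hl.le)
    have hIndepF : IndepFun F1 F2 μ := bern_indep_block μ N M hMN Z l t hmeas hindep
    have hintD : Integrable (fun ω => ∑ n ∈ Finset.Ico M N, Z n ω) μ :=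
      integrable_finset_sum _ (fun n hn => hint_Z n (hIco n hn))
    have hF2mean : 1 ≤ μ[F2] := by
      have hmono : μ[fun ω => 1 + l * ∑ n ∈ Finset.Ico M N, Z n ω] ≤ μ[F2] := by
        refine integral_mono_ae ((integrable_const 1).add (hintD.const_mul l)) hintF2 ?_
        refine ae_of_all _ fun ω => ?_
        have := Real.add_one_le_exp (l * ∑ n ∈ Finset.Ico M N, Z n ω)
        rw [hF2]; dsimp only; linarith
      have hmeanD : μ[fun ω => 1 + l * ∑ n ∈ Finset.Ico M N, Z n ω] = 1 := by
        rw [integral_add (integrable_const 1) (hintD.const_mul l), integral_const,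
          integral_const_mul, integral_finset_sum _ (fun n hn => hint_Z n (hIco n hn))]
        rw [Finset.sum_eq_zero fun n hn => hmean n (hIco n hn)]
        simp
      linarith
    have hF1nonneg : 0 ≤ μ[F1] :=
      integral_nonneg fun ω => Set.indicator_nonneg (fun _ _ => (Real.exp_pos _).le) ω
    have hprod : μ[F1] ≤ μ[fun ω => F1 ω * F2 ω] := by
      have hmul_eq : μ[fun ω => F1 ω * F2 ω] = μ[F1] * μ[F2] :=
        hIndepF.integral_fun_mul_eq_mul_integral hintF1.aestronglyMeasurable hintF2.aestronglyMeasurable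
      rw [hmul_eq]
      nlinarith
    have hprodeq : (fun ω => F1 ω * F2 ω)
        = Set.indicator (A M) (fun ω => Real.exp (l * ∑ n ∈ Finset.range N, Z n ω)) := by
      funext ω
      by_cases hω : ω ∈ A M
      · rw [hF1]
        simp only [Set.indicator_of_mem hω, hF2]
        rw [← Real.exp_add, ← mul_add, Finset.sum_range_add_sum_Ico _ hMN]
      · simp only [hF1, Set.indicator_of_notMem hω, zero_mul]
    calc Real.exp (l * t) * (μ (A M)).toReal
        ≤ ∫ ω in A M, Real.exp (l * ∑ n ∈ Finset.range M, Z n ω) ∂μ := hstep1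
      _ = μ[F1] := (integral_indicator (hAmeas M)).symm
      _ ≤ μ[fun ω => F1 ω * F2 ω] := hprod
      _ = ∫ ω in A M, Real.exp (l * ∑ n ∈ Finset.range N, Z n ω) ∂μ := by
          rw [hprodeq, integral_indicator (hAmeas M)]
  have hintN : Integrable (fun ω => Real.exp (l * ∑ n ∈ Finset.range N, Z n ω)) μ :=
    hint_exp _ (fun n hn => Finset.mem_range.mp hn)
  have hsum_le : ∑ M ∈ Finset.Icc 1 N, (μ (A M)).toReal
      ≤ Real.exp ((N:ℝ) * (v * e) - l * t) := by
    have h1 : Real.exp (l * t) * ∑ M ∈ Finset.Icc 1 N, (μ (A M)).toReal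
        ≤ ∑ M ∈ Finset.Icc 1 N,
            ∫ ω in A M, Real.exp (l * ∑ n ∈ Finset.range N, Z n ω) ∂μ := by
      rw [Finset.mul_sum]
      exact Finset.sum_le_sum hkey
    have h2 : ∑ M ∈ Finset.Icc 1 N,
          ∫ ω in A M, Real.exp (l * ∑ n ∈ Finset.range N, Z n ω) ∂μ
        = ∫ ω in ⋃ M ∈ Finset.Icc 1 N, A M,
            Real.exp (l * ∑ n ∈ Finset.range N, Z n ω) ∂μ :=
      (integral_biUnion_finset (Finset.Icc 1 N) (fun M _ => hAmeas M) hdisjA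
        (fun M _ => hintN.integrableOn)).symm
    have h3 : ∫ ω in ⋃ M ∈ Finset.Icc 1 N, A M,
          Real.exp (l * ∑ n ∈ Finset.range N, Z n ω) ∂μ
        ≤ μ[fun ω => Real.exp (l * ∑ n ∈ Finset.range N, Z n ω)] :=
      setIntegral_le_integral hintN (ae_of_all _ fun ω => (Real.exp_pos _).le)
    have h4 : Real.exp (l * t) * ∑ M ∈ Finset.Icc 1 N, (μ (A M)).toReal
        ≤ Real.exp ((N:ℝ) * (v * e)) := by
      rw [h2] at h1
      exact h1.trans (h3.trans hmgfN)
    rw [Real.exp_sub]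
    rw [le_div_iff₀ (Real.exp_pos _)]
    calc (∑ M ∈ Finset.Icc 1 N, (μ (A M)).toReal) * Real.exp (l * t)
        = Real.exp (l * t) * ∑ M ∈ Finset.Icc 1 N, (μ (A M)).toReal := by ring
      _ ≤ Real.exp ((N:ℝ) * (v * e)) := h4
  have harith : (N:ℝ) * (v * e) - l * t ≤ -(t ^ 2) / (2 * N * v + 2 * t / 3) := by
    have hE : e ≤ l ^ 2 / (2 * (1 - l / 3)) := bern_exp_bound hl.le hl3
    have h1l3 : 0 < 1 - l / 3 := by linarith
    have hmul : (N:ℝ) * (v * e) ≤ (N * v) * (l ^ 2 / (2 * (1 - l / 3))) := by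
      rw [← mul_assoc]
      exact mul_le_mul_of_nonneg_left hE hc.le
    have heq : (N * v) * (l ^ 2 / (2 * (1 - l / 3))) - l * t
        = -(t ^ 2) / (2 * N * v + 2 * t / 3) := by
      rw [hl_def]
      have h2 : (2 * (N:ℝ) * v + 2 * t / 3) ≠ 0 := by positivity
      have h3 : ((N:ℝ) * v + t / 3) ≠ 0 := hct.ne'
      have h4 : (1 : ℝ) - t / (↑N * v + t / 3) / 3 = (N * v) / (N * v + t / 3) := by
        field_simp
        ring
      rw [h4]
      have h5 : (2 * ((N:ℝ) * v / (N * v + t / 3))) ≠ 0 := by positivity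
      field_simp
      ring
    linarith [hmul, heq]
  calc μ {ω | ∃ M, 1 ≤ M ∧ M ≤ N ∧ t < ∑ n ∈ Finset.range M, Z n ω}
      ≤ μ (⋃ M ∈ Finset.Icc 1 N, A M) := measure_mono hsubset
    _ ≤ ∑ M ∈ Finset.Icc 1 N, μ (A M) := measure_biUnion_finset_le _ _
    _ = ENNReal.ofReal (∑ M ∈ Finset.Icc 1 N, (μ (A M)).toReal) := by
        rw [ENNReal.ofReal_sum_of_nonneg (fun M _ => ENNReal.toReal_nonneg)]
        exact Finset.sum_congr rfl fun M _ => (ENNReal.ofReal_toReal (measure_ne_top μ _)).symm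
    _ ≤ ENNReal.ofReal (Real.exp (-(t ^ 2) / (2 * N * v + 2 * t / 3))) :=
        ENNReal.ofReal_le_ofReal (hsum_le.trans (Real.exp_le_exp.mpr harith))

/-- Maximal Bernstein inequality: if `Z 0, …, Z (N-1)` are i.i.d. mean-zero random
variables with variance `σ² > 0` and `|Z n| ≤ 1` a.s., then for every `t > 0`,
`P(max_{1 ≤ M ≤ N} |∑_{n<M} Z n| > t) ≤ 2 exp(−t²/(2Nσ² + 2t/3))`. -/
theorem stmt11 {Ω : Type*} [MeasurableSpace Ω] (μ : Measure Ω) [IsProbabilityMeasure μ]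
    (N : ℕ) (hN : 1 ≤ N) (Z : ℕ → Ω → ℝ) (σ : ℝ) (hσ : 0 < σ ^ 2)
    (hmeas : ∀ n, Measurable (Z n))
    (hindep : iIndepFun (m := fun _ : Fin N => (inferInstance : MeasurableSpace ℝ))
      (fun n : Fin N => Z n) μ)
    (hident : ∀ n < N, Measure.map (Z n) μ = Measure.map (Z 0) μ)
    (hmean : μ[Z 0] = 0)
    (hvar : variance (Z 0) μ = σ ^ 2)
    (hbdd : ∀ n < N, ∀ᵐ ω ∂μ, |Z n ω| ≤ 1)
    (t : ℝ) (ht : 0 < t) :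
    μ {ω | ∃ M, 1 ≤ M ∧ M ≤ N ∧ t < |∑ n ∈ Finset.range M, Z n ω|}
      ≤ ENNReal.ofReal (2 * Real.exp (-(t ^ 2) / (2 * N * σ ^ 2 + 2 * t / 3))) := by
  have hmean_n : ∀ n < N, μ[Z n] = 0 := by
    intro n hn
    have h1 : μ[Z n] = ∫ x, x ∂(Measure.map (Z n) μ) :=
      (integral_map (hmeas n).aemeasurable aestronglyMeasurable_id).symm
    have h2 : ∫ x : ℝ, x ∂(Measure.map (Z 0) μ) = ∫ ω, Z 0 ω ∂μ :=
      integral_map (hmeas 0).aemeasurable aestronglyMeasurable_id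
    rw [h1, hident n hn, h2]
    exact hmean
  have hsq_eq : ∀ n < N, μ[fun ω => (Z n ω) ^ 2] = μ[fun ω => (Z 0 ω) ^ 2] := by
    intro n hn
    have hid2 : AEStronglyMeasurable (fun x : ℝ => x ^ 2) (Measure.map (Z n) μ) :=
      (measurable_id.pow_const 2).aestronglyMeasurable
    have hid2' : AEStronglyMeasurable (fun x : ℝ => x ^ 2) (Measure.map (Z 0) μ) :=
      (measurable_id.pow_const 2).aestronglyMeasurable
    have h1 : μ[fun ω => (Z n ω) ^ 2] = ∫ x, x ^ 2 ∂(Measure.map (Z n) μ) :=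
      (integral_map (hmeas n).aemeasurable hid2).symm
    rw [h1, hident n hn, integral_map (hmeas 0).aemeasurable hid2']
  have hmem : MemLp (Z 0) 2 μ :=
    MemLp.of_bound (hmeas 0).aestronglyMeasurable 1
      (by filter_upwards [hbdd 0 hN] with ω h; rwa [Real.norm_eq_abs])
  have hsq0 : μ[fun ω => (Z 0 ω) ^ 2] = σ ^ 2 := by
    have hvd := variance_eq_sub hmem
    rw [hvar, hmean] at hvd
    have hpi : μ[(Z 0) ^ 2] = μ[fun ω => (Z 0 ω) ^ 2] := rfl
    rw [hpi] at hvd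
    simp at hvd
    linarith
  have hsq_n : ∀ n < N, μ[fun ω => (Z n ω) ^ 2] ≤ σ ^ 2 :=
    fun n hn => le_of_eq ((hsq_eq n hn).trans hsq0)
  have hpos := bern_one_sided μ N hN Z (σ ^ 2) hσ hmeas hindep hmean_n hsq_n hbdd t ht
  set W : ℕ → Ω → ℝ := fun n ω => -(Z n ω) with hW
  have hmeasW : ∀ n, Measurable (W n) := fun n => (hmeas n).neg
  have hindepW : iIndepFun (m := fun _ : Fin N => (inferInstance : MeasurableSpace ℝ))
      (fun n : Fin N => W n) μ :=
    hindep.comp (fun _ : Fin N => fun x : ℝ => -x) (fun _ => measurable_neg)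
  have hmeanW : ∀ n < N, μ[W n] = 0 := by
    intro n hn
    have : μ[W n] = -μ[Z n] := integral_neg _
    rw [this, hmean_n n hn, neg_zero]
  have hsqW : ∀ n < N, μ[fun ω => (W n ω) ^ 2] ≤ σ ^ 2 := by
    intro n hn
    have heq : (fun ω => (W n ω) ^ 2) = fun ω => (Z n ω) ^ 2 := by
      funext ω; simp [hW]
    rw [heq]
    exact hsq_n n hn
  have hbddW : ∀ n < N, ∀ᵐ ω ∂μ, |W n ω| ≤ 1 := by
    intro n hn
    filter_upwards [hbdd n hn] with ω h
    simpa [hW] using h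
  have hneg := bern_one_sided μ N hN W (σ ^ 2) hσ hmeasW hindepW hmeanW hsqW hbddW t ht
  have hsub : {ω | ∃ M, 1 ≤ M ∧ M ≤ N ∧ t < |∑ n ∈ Finset.range M, Z n ω|}
      ⊆ {ω | ∃ M, 1 ≤ M ∧ M ≤ N ∧ t < ∑ n ∈ Finset.range M, Z n ω}
        ∪ {ω | ∃ M, 1 ≤ M ∧ M ≤ N ∧ t < ∑ n ∈ Finset.range M, W n ω} := by
    rintro ω ⟨M, h1, h2, h3⟩
    rcases lt_abs.mp h3 with h | h
    · exact Or.inl ⟨M, h1, h2, h⟩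
    · refine Or.inr ⟨M, h1, h2, ?_⟩
      have hsum : ∑ n ∈ Finset.range M, W n ω = -∑ n ∈ Finset.range M, Z n ω := by
        simp [hW]
      rw [hsum]
      exact h
  have hexp : (0:ℝ) ≤ Real.exp (-(t ^ 2) / (2 * N * σ ^ 2 + 2 * t / 3)) := (Real.exp_pos _).le
  calc μ {ω | ∃ M, 1 ≤ M ∧ M ≤ N ∧ t < |∑ n ∈ Finset.range M, Z n ω|}
      ≤ μ ({ω | ∃ M, 1 ≤ M ∧ M ≤ N ∧ t < ∑ n ∈ Finset.range M, Z n ω}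
          ∪ {ω | ∃ M, 1 ≤ M ∧ M ≤ N ∧ t < ∑ n ∈ Finset.range M, W n ω}) := measure_mono hsub
    _ ≤ μ {ω | ∃ M, 1 ≤ M ∧ M ≤ N ∧ t < ∑ n ∈ Finset.range M, Z n ω}
        + μ {ω | ∃ M, 1 ≤ M ∧ M ≤ N ∧ t < ∑ n ∈ Finset.range M, W n ω} := measure_union_le _ _
    _ ≤ ENNReal.ofReal (Real.exp (-(t ^ 2) / (2 * N * σ ^ 2 + 2 * t / 3)))
        + ENNReal.ofReal (Real.exp (-(t ^ 2) / (2 * N * σ ^ 2 + 2 * t / 3))) := add_le_add hpos hneg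
    _ = ENNReal.ofReal (2 * Real.exp (-(t ^ 2) / (2 * N * σ ^ 2 + 2 * t / 3))) := by
        rw [← ENNReal.ofReal_add hexp hexp]
        congr 1
        ring
end

section
/- For any real t > 0, constants C₁ > 0, integers m, h, d with d ≥ 2 and √d·√(2^{m+1}) ≤ 2^{m−h}, if t = C₁·√d·√(2^{m+1})·√(h·2^{1.5κ−h}) with κ = ⌈log₂(h+2)⌉, then 2^{κ+1}·exp(−t²·2^{-1.5κ}/((8+2√2)·2^{m−h} + 2t/3)) ≤ 4·exp(−(2C₁²/(8+2√2+2C₁) − 1)·h·d). -/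
lemma aux_nat (h : ℕ) (hh : 1 ≤ h) : 8*h^2*(h+1)^3 ≤ 81*4^h := by
  induction h, hh using Nat.le_induction with
  | base => norm_num
  | succ n hn ih =>
    rcases n with _|_|_|k
    · omega
    · norm_num
    · norm_num
    · have key : (k+5)^3 ≤ 4*(k+3)^2*(k+4) := by nlinarith
      calc 8*(k+3+1)^2*(k+3+1+1)^3 = 8*(k+4)^2*(k+5)^3 := by ring
        _ ≤ 8*(k+4)^2*(4*(k+3)^2*(k+4)) := Nat.mul_le_mul_left _ key
        _ = 4*(8*(k+3)^2*(k+3+1)^3) := by ring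
        _ ≤ 4*(81*4^(k+3)) := Nat.mul_le_mul_left _ ih
        _ = 81*4^(k+3+1) := by ring

set_option maxHeartbeats 1000000 in
/-- The key exponential bound: with `κ = ⌈log₂(h+2)⌉` and
`t = C₁·√d·√(2^{m+1})·√(h·2^{1.5κ−h})`, assuming `√d·√(2^{m+1}) ≤ 2^{m−h}`,
`2^{κ+1}·exp(−t²·2^{−1.5κ}/((8+2√2)·2^{m−h} + 2t/3))
  ≤ 4·exp(−(2C₁²/(8+2√2+2C₁) − 1)·h·d)`. -/
theorem stmt16 (d m h κ : ℕ) (hd : 2 ≤ d) (hh : 1 ≤ h)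
    (hκ : κ = Nat.clog 2 (h + 2))
    (hmh : Real.sqrt d * Real.sqrt (2 ^ (m + 1)) ≤ (2:ℝ) ^ ((m : ℝ) - h))
    (C₁ : ℝ) (hC₁ : 0 < C₁) (t : ℝ) (htpos : 0 < t)
    (ht : t = C₁ * Real.sqrt d * Real.sqrt (2 ^ (m + 1)) *
      Real.sqrt ((h : ℝ) * (2:ℝ) ^ ((3/2 : ℝ) * κ - h))) :
    (2:ℝ) ^ (κ + 1) *
        Real.exp (-(t ^ 2 * ((2:ℝ) ^ ((3/2 : ℝ) * κ))⁻¹) /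
          ((8 + 2 * Real.sqrt 2) * (2:ℝ) ^ ((m : ℝ) - h) + 2 * t / 3))
      ≤ 4 * Real.exp (-(2 * C₁ ^ 2 / (8 + 2 * Real.sqrt 2 + 2 * C₁) - 1) * h * d) := by
  have sqrt2_nonneg : (0:ℝ) ≤ Real.sqrt 2 := Real.sqrt_nonneg 2
  set A : ℝ := (2:ℝ) ^ ((m : ℝ) - h) with hA
  have hApos : 0 < A := Real.rpow_pos_of_pos (by norm_num) _
  set B : ℝ := 8 + 2 * Real.sqrt 2 with hB
  have hBpos : (0:ℝ) < B := by positivity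
  set c : ℝ := B + 2 * C₁ with hc
  clear_value A B c
  have hcpos : (0:ℝ) < c := by rw [hc]; positivity
  have hdpos : (0:ℝ) < (d:ℝ) := by positivity
  have hdR : (2:ℝ) ≤ (d:ℝ) := by exact_mod_cast hd
  have hhR : (1:ℝ) ≤ (h:ℝ) := by exact_mod_cast hh
  -- κ bound in ℕ
  have hκ1 : 1 ≤ κ := by
    rw [hκ]; exact Nat.clog_pos (by norm_num) (by omega)
  have hκ2 : 2 ^ κ ≤ 2 * h + 2 := by
    have h1 : 2 ^ (κ - 1) < h + 2 := by
      rw [hκ]; exact Nat.pow_pred_clog_lt_self (b := 2) (x := h + 2) (by norm_num) (by omega)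
    have h2 : 2 ^ κ = 2 * 2 ^ (κ - 1) := by
      rw [← pow_succ']
      congr 1
      omega
    omega
  -- h² · 2^{3κ} ≤ 81 · 4^h in ℕ
  have hnat : h ^ 2 * (2 ^ κ) ^ 3 ≤ 81 * 4 ^ h := by
    calc h ^ 2 * (2 ^ κ) ^ 3 ≤ h ^ 2 * (2 * h + 2) ^ 3 :=
          Nat.mul_le_mul_left _ (Nat.pow_le_pow_left hκ2 3)
      _ = 8 * h ^ 2 * (h + 1) ^ 3 := by ring
      _ ≤ 81 * 4 ^ h := aux_nat h hh
  -- real: h · 2^{1.5κ - h} ≤ 9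
  have hx9 : (h : ℝ) * (2:ℝ) ^ ((3/2 : ℝ) * κ - h) ≤ 9 := by
    set x : ℝ := (2:ℝ) ^ ((3/2 : ℝ) * (κ:ℝ) - (h:ℝ)) with hxdef
    have hxpos : 0 < x := Real.rpow_pos_of_pos (by norm_num) _
    have hx2 : ((h:ℝ) * x) ^ 2 = (h:ℝ)^2 * (2:ℝ) ^ (3 * (κ:ℝ) - 2 * (h:ℝ)) := by
      rw [mul_pow, hxdef, ← Real.rpow_natCast ((2:ℝ) ^ ((3/2:ℝ)*(κ:ℝ) - (h:ℝ))) 2,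
        ← Real.rpow_mul (by norm_num)]
      congr 1
      push_cast
      ring
    have hcast : ((h:ℝ)^2 * (2:ℝ) ^ (3 * (κ:ℝ) - 2 * (h:ℝ))) * (4:ℝ) ^ h
        = ((h ^ 2 * (2 ^ κ) ^ 3 : ℕ) : ℝ) := by
      have e4 : (4:ℝ) ^ h = (2:ℝ) ^ ((2 * (h:ℝ)) : ℝ) := by
        rw [show ((2:ℝ) * (h:ℝ)) = (((2*h : ℕ)) : ℝ) by push_cast; ring,
          Real.rpow_natCast, pow_mul]
        norm_num
      have e5 : (2:ℝ) ^ (3 * (κ:ℝ) - 2 * (h:ℝ)) * (2:ℝ) ^ ((2 * (h:ℝ)) : ℝ)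
          = (2:ℝ) ^ ((3 * (κ:ℝ)) : ℝ) := by
        rw [← Real.rpow_add (by norm_num)]
        ring_nf
      have e6 : (2:ℝ) ^ ((3 * (κ:ℝ)) : ℝ) = (((2 ^ κ) ^ 3 : ℕ) : ℝ) := by
        rw [show (3 * (κ:ℝ)) = (((3*κ : ℕ)) : ℝ) by push_cast; ring,
          Real.rpow_natCast]
        push_cast
        rw [mul_comm, pow_mul]
      push_cast
      calc (h:ℝ)^2 * (2:ℝ) ^ (3 * (κ:ℝ) - 2 * (h:ℝ)) * (4:ℝ) ^ h
          = (h:ℝ)^2 * ((2:ℝ) ^ (3 * (κ:ℝ) - 2 * (h:ℝ)) * (4:ℝ) ^ h) := by ring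
        _ = (h:ℝ)^2 * (2:ℝ) ^ ((3 * (κ:ℝ)) : ℝ) := by rw [e4, e5]
        _ = (h:ℝ)^2 * ((2:ℝ) ^ κ) ^ 3 := by rw [e6]; push_cast; ring
    have h4pos : (0:ℝ) < (4:ℝ) ^ h := by positivity
    have hsq : ((h:ℝ) * x) ^ 2 ≤ 81 := by
      rw [hx2, ← mul_le_mul_iff_left₀ h4pos, hcast]
      calc ((h ^ 2 * (2 ^ κ) ^ 3 : ℕ) : ℝ) ≤ ((81 * 4 ^ h : ℕ) : ℝ) := by
            exact_mod_cast hnat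
        _ = 81 * (4:ℝ) ^ h := by push_cast; ring
    nlinarith [mul_pos (mul_pos (by linarith : (0:ℝ) < (h:ℝ)) hxpos) hxpos,
      mul_nonneg (by linarith : (0:ℝ) ≤ (h:ℝ)) hxpos.le]
  -- t ≤ 3 C₁ A
  have ht3 : t ≤ 3 * C₁ * A := by
    rw [ht]
    have h1 : Real.sqrt ((h : ℝ) * (2:ℝ) ^ ((3/2 : ℝ) * κ - h)) ≤ 3 := by
      calc Real.sqrt ((h : ℝ) * (2:ℝ) ^ ((3/2 : ℝ) * κ - h)) ≤ Real.sqrt 9 :=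
            Real.sqrt_le_sqrt hx9
        _ = 3 := by
            rw [show (9:ℝ) = 3^2 by norm_num, Real.sqrt_sq (by norm_num)]
    have h2 := mul_le_mul hmh h1 (Real.sqrt_nonneg _) hApos.le
    calc C₁ * Real.sqrt d * Real.sqrt (2 ^ (m + 1)) *
          Real.sqrt ((h : ℝ) * (2:ℝ) ^ ((3/2 : ℝ) * κ - h))
        = C₁ * ((Real.sqrt d * Real.sqrt (2 ^ (m + 1))) *
            Real.sqrt ((h : ℝ) * (2:ℝ) ^ ((3/2 : ℝ) * κ - h))) := by ring
      _ ≤ C₁ * (A * 3) := mul_le_mul_of_nonneg_left h2 hC₁.le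
      _ = 3 * C₁ * A := by ring
  -- numerator identity
  have e3 : (2:ℝ)^(m+1) * ((2:ℝ)^((3/2:ℝ)*(κ:ℝ) - (h:ℝ)) * ((2:ℝ)^((3/2:ℝ)*(κ:ℝ)))⁻¹)
      = 2 * A := by
    rw [← Real.rpow_natCast (2:ℝ) (m+1), ← Real.rpow_neg (by norm_num : (0:ℝ) ≤ 2),
      ← Real.rpow_add (by norm_num : (0:ℝ) < 2), ← Real.rpow_add (by norm_num : (0:ℝ) < 2), hA,
      show (2:ℝ) * (2:ℝ)^((m:ℝ)-(h:ℝ)) = (2:ℝ)^(1:ℝ) * (2:ℝ)^((m:ℝ)-(h:ℝ)) by norm_num,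
      ← Real.rpow_add (by norm_num : (0:ℝ) < 2)]
    congr 1
    push_cast
    ring
  have hnum : t ^ 2 * ((2:ℝ) ^ ((3/2 : ℝ) * κ))⁻¹ = 2 * C₁ ^ 2 * d * h * A := by
    have s1 : Real.sqrt d ^ 2 = (d:ℝ) := Real.sq_sqrt (by positivity)
    have s2 : Real.sqrt ((2:ℝ)^(m+1)) ^ 2 = (2:ℝ)^(m+1) := Real.sq_sqrt (by positivity)
    have s3 : Real.sqrt ((h:ℝ) * (2:ℝ)^((3/2:ℝ)*(κ:ℝ) - (h:ℝ))) ^ 2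
        = (h:ℝ) * (2:ℝ)^((3/2:ℝ)*(κ:ℝ) - (h:ℝ)) := Real.sq_sqrt (by positivity)
    rw [ht, mul_pow, mul_pow, mul_pow, s1, s2, s3]
    linear_combination (C₁ ^ 2 * (d:ℝ) * (h:ℝ)) * e3
  -- denominator bound
  have hD : B * A + 2 * t / 3 ≤ c * A := by
    have h1 : 2 * t / 3 ≤ 2 * C₁ * A := by nlinarith
    rw [hc]
    nlinarith [hApos, hBpos]
  have hDpos : 0 < B * A + 2 * t / 3 := by positivity
  -- exponent bound
  have hexp : -(t ^ 2 * ((2:ℝ) ^ ((3/2 : ℝ) * κ))⁻¹) / (B * A + 2 * t / 3)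
      ≤ -(2 * C₁ ^ 2 * d * h / c) := by
    rw [hnum, neg_div, neg_le_neg_iff]
    have h1 : 2 * C₁ ^ 2 * (d:ℝ) * h / c = (2 * C₁ ^ 2 * d * h * A) / (c * A) := by
      rw [mul_div_mul_right _ _ (ne_of_gt hApos)]
    rw [h1]
    apply div_le_div_of_nonneg_left _ hDpos hD
    exact mul_nonneg (mul_nonneg (mul_nonneg (by positivity) hdpos.le) (by positivity)) hApos.le
  -- 2^{κ+1} ≤ 4(h+2)
  have h2κ : (2:ℝ) ^ (κ + 1) ≤ 4 * ((h:ℝ) + 2) := by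
    have hn : (2:ℕ) ^ (κ + 1) ≤ 4 * (h + 2) := by
      have h2 : 2 ^ (κ+1) = 2 * 2 ^ κ := by ring
      omega
    calc (2:ℝ) ^ (κ + 1) = (((2:ℕ) ^ (κ+1) : ℕ) : ℝ) := by push_cast; ring
      _ ≤ ((4 * (h + 2) : ℕ) : ℝ) := by exact_mod_cast hn
      _ = 4 * ((h:ℝ) + 2) := by push_cast; ring
  have hhd : (h:ℝ) + 2 ≤ Real.exp ((h:ℝ) * d) := by
    have h1 : (h:ℝ)*d + 1 ≤ Real.exp ((h:ℝ)*d) := Real.add_one_le_exp _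
    have h2 : (h:ℝ)*2 ≤ (h:ℝ)*d := mul_le_mul_of_nonneg_left hdR (by linarith)
    linarith
  calc (2:ℝ) ^ (κ + 1) *
        Real.exp (-(t ^ 2 * ((2:ℝ) ^ ((3/2 : ℝ) * κ))⁻¹) / (B * A + 2 * t / 3))
      ≤ (4 * ((h:ℝ) + 2)) * Real.exp (-(2 * C₁ ^ 2 * d * h / c)) :=
        mul_le_mul h2κ (Real.exp_le_exp.mpr hexp) (Real.exp_pos _).le (by positivity)
    _ ≤ (4 * Real.exp ((h:ℝ) * d)) * Real.exp (-(2 * C₁ ^ 2 * d * h / c)) := by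
        have := Real.exp_pos (-(2 * C₁ ^ 2 * (d:ℝ) * h / c))
        nlinarith
    _ = 4 * Real.exp (-(2 * C₁ ^ 2 / c - 1) * h * d) := by
        rw [mul_assoc, ← Real.exp_add]
        congr 1
        ring
end
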